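/- arXiv:math/0509449 — 10 statements merged into one kernel-verified Lean document; each statement's English description precedes it below -/
import Mathlib

section
/- Let G be a group that is ICC. Then every subgroup H of G of finite index is itself ICC. -/
/-- A group is ICC ("à classes de conjugaison infinies") if it is infinite and
the conjugacy class of every element `g ≠ 1` is infinite. -/
def IsICC (G : Type*) [Group G] : Prop :=
  Infinite G ∧ ∀ g : G, g ≠ 1 → (conjugatesOf g).Infinite

/-- In an ICC group, every subgroup of finite index is itself ICC. -/
theorem subgroup_of_finiteIndex_isICC {G : Type*} [Group G] (hG : IsICC G)
    (H : Subgroup G) (hH : H.index ≠ 0) : IsICC H := by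
  obtain ⟨hInf, hConj⟩ := hG
  have hQ : Finite (G ⧸ H) := Nat.finite_of_card_ne_zero hH
  constructor
  · by_contra hfin
    rw [not_infinite_iff_finite] at hfin
    have : Finite G :=
      Finite.of_equiv _ (Subgroup.groupEquivQuotientProdSubgroup (s := H)).symm
    haveI := this
    exact not_finite G
  · intro x hx
    have hx1 : (x : G) ≠ 1 := by
      exact fun h => hx (Subtype.ext h)
    set C : Set G := {g : G | ∃ k : H, (k : G) * x * (k : G)⁻¹ = g} with hCdef
    have hC : C.Infinite := by
      by_contra hfin
      rw [Set.not_infinite] at hfin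
      have hcov : conjugatesOf (x : G) ⊆
          ⋃ q : G ⧸ H, (fun y => (Quotient.out q) * y * (Quotient.out q)⁻¹) '' C := by
        intro g hg
        obtain ⟨c, hc⟩ := isConj_iff.mp hg
        have hrc : (Quotient.out (c : G ⧸ H))⁻¹ * c ∈ H := by
          rw [← QuotientGroup.eq]
          exact QuotientGroup.out_eq' _
        set r := Quotient.out ((c : G ⧸ H))
        refine Set.mem_iUnion.mpr ⟨(c : G ⧸ H), ⟨(r⁻¹ * c) * x * (r⁻¹ * c)⁻¹,
          ⟨⟨r⁻¹ * c, hrc⟩, rfl⟩, ?_⟩⟩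
        show r * ((r⁻¹ * c) * ↑x * (r⁻¹ * c)⁻¹) * r⁻¹ = g
        rw [← hc]; group
      exact (hConj _ hx1) ((Set.finite_iUnion (fun q => hfin.image _)).subset hcov)
    have himg : Subtype.val '' conjugatesOf x = C := by
      ext g
      constructor
      · rintro ⟨y, hy, rfl⟩
        obtain ⟨k, hk⟩ := isConj_iff.mp hy
        exact ⟨k, by rw [← hk]; rfl⟩
      · rintro ⟨k, hk⟩
        exact ⟨k * x * k⁻¹, isConj_iff.mpr ⟨k, rfl⟩, hk⟩
    exact Set.Infinite.of_image _ (himg ▸ hC)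
end

section
/- Let G be a torsion-free group (every element other than the identity has infinite order) possessing a subgroup H of finite index that is ICC. Then G is itself ICC. -/
/-- A monoid is torsion-free if every element other than `1` has infinite order
(the definition `Monoid.IsTorsionFree` of the older Mathlib, since removed). -/
def Monoid.IsTorsionFree (G : Type*) [Monoid G] : Prop :=
  ∀ g : G, g ≠ 1 → ¬IsOfFinOrder g

/-- A torsion-free group possessing an ICC subgroup of finite index is itself ICC. -/
theorem isICC_of_torsionFree_of_finiteIndex_isICC {G : Type*} [Group G]
    (htf : Monoid.IsTorsionFree G) (H : Subgroup G) (hidx : H.index ≠ 0)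
    (hH : IsICC H) : IsICC G := by
  obtain ⟨hinf, hicc⟩ := hH
  refine ⟨Infinite.of_injective (Subtype.val : H → G) Subtype.val_injective, ?_⟩
  intro g hg hfin
  obtain ⟨n, hn0, -, hnH⟩ := Subgroup.exists_pow_mem_of_index_ne_zero hidx g
  have hgn : g ^ n ≠ 1 := fun h =>
    htf g hg (isOfFinOrder_iff_pow_eq_one.mpr ⟨n, hn0, h⟩)
  -- conjugates of g^n (in G) are finite
  have hfin' : (conjugatesOf (g ^ n)).Finite := by
    have hsub : conjugatesOf (g ^ n) ⊆ (fun x => x ^ n) '' conjugatesOf g := by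
      intro x hx
      obtain ⟨u, rfl⟩ := isConj_iff.mp hx
      refine ⟨u * g * u⁻¹, isConj_iff.mpr ⟨u, rfl⟩, ?_⟩
      show (u * g * u⁻¹) ^ n = u * g ^ n * u⁻¹
      rw [conj_pow]
    exact ((hfin.image _).subset hsub)
  -- but conjugates of g^n in H inject into conjugates in G
  have h1 : (⟨g ^ n, hnH⟩ : H) ≠ 1 := fun h => hgn (by simpa using congrArg Subtype.val h)
  have := hicc ⟨g ^ n, hnH⟩ h1
  have himg : (Subtype.val '' conjugatesOf (⟨g ^ n, hnH⟩ : H)).Infinite :=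
    this.image (Set.injOn_of_injective Subtype.val_injective)
  apply himg.mono ?_ |>.elim
  · exact hfin'
  · rintro x ⟨c, hc, rfl⟩
    obtain ⟨u, hu⟩ := isConj_iff.mp hc
    exact isConj_iff.mpr ⟨u, by rw [← hu]; rfl⟩
end

section
/- Let G be a group and H a subgroup of G of index 2; assume H is ICC. Then either G is ICC, or there exists an element f ∈ G with f ≠ 1, f² = 1, f central in G and f ∉ H, so that G is the internal direct product of H and the order-2 subgroup generated by f (in particular G is isomorphic to H × ℤ/2ℤ). -/
/-- If `H` is a subgroup of index `2` of a group `G` and `H` is ICC, then either `G` is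
ICC, or there is a central element `f ≠ 1` of order two with `f ∉ H`, so that `G` is the
internal direct product of `H` and the order-2 subgroup generated by `f`; in particular
`G` is isomorphic to `H × ℤ/2ℤ`. -/
theorem isICC_or_directProduct_of_index_two {G : Type*} [Group G]
    (H : Subgroup G) (hidx : H.index = 2) (hH : IsICC H) :
    IsICC G ∨
      ∃ f : G, f ≠ 1 ∧ f ^ 2 = 1 ∧ f ∈ Subgroup.center G ∧ f ∉ H ∧
        Nonempty (G ≃* H × Multiplicative (ZMod 2)) := by
  classical
  obtain ⟨hHinf, hHconj⟩ := hH
  have hGinf : Infinite G := Infinite.of_injective _ H.subtype_injective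
  by_cases hG : IsICC G
  · exact Or.inl hG
  right
  -- elements of `H` different from 1 have infinite conjugacy classes in `G`
  have keyH : ∀ x : G, x ∈ H → x ≠ 1 → (conjugatesOf x).Infinite := by
    intro x hx hx1
    have h1 : (conjugatesOf (⟨x, hx⟩ : H)).Infinite :=
      hHconj _ (by simpa [Subtype.ext_iff] using hx1)
    have h2 : (((↑) : H → G) '' conjugatesOf (⟨x, hx⟩ : H)).Infinite :=
      h1.image Subtype.coe_injective.injOn
    refine h2.mono ?_
    rintro y ⟨z, hz, rfl⟩
    obtain ⟨k, hk⟩ := isConj_iff.mp hz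
    refine isConj_iff.mpr ⟨(k : G), ?_⟩
    rw [← hk]
    push_cast
    rfl
  -- pick a nontrivial element with finite conjugacy class
  obtain ⟨g, hg1, hgfin⟩ : ∃ g : G, g ≠ 1 ∧ (conjugatesOf g).Finite := by
    by_contra hc
    push_neg at hc
    exact hG ⟨hGinf, fun g h => hc g h⟩
  have hgH : g ∉ H := fun h => keyH g h hg1 hgfin
  -- `g` commutes with every element of `H`
  have hcomm : ∀ h ∈ H, g * h = h * g := by
    intro h hh
    have hc1 : g * h⁻¹ * g⁻¹ ∈ H := by
      rw [Subgroup.mul_mem_iff_of_index_two hidx, Subgroup.mul_mem_iff_of_index_two hidx]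
      simp [hgH, H.inv_mem hh]
    have hcH : h * (g * h⁻¹ * g⁻¹) ∈ H := H.mul_mem hh hc1
    set c : G := h * (g * h⁻¹ * g⁻¹) with hcdef
    have hS : ((fun p : G × G => p.1 * p.2⁻¹) '' (conjugatesOf g ×ˢ conjugatesOf g)).Finite :=
      (hgfin.prod hgfin).image _
    have hsub : (((↑) : H → G) '' conjugatesOf (⟨c, hcH⟩ : H)) ⊆
        (fun p : G × G => p.1 * p.2⁻¹) '' (conjugatesOf g ×ˢ conjugatesOf g) := by
      rintro y ⟨z, hz, rfl⟩
      obtain ⟨k, hk⟩ := isConj_iff.mp hz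
      refine ⟨(((k : G) * h) * g * ((k : G) * h)⁻¹, (k : G) * g * (k : G)⁻¹),
        ⟨isConj_iff.mpr ⟨(k : G) * h, rfl⟩, isConj_iff.mpr ⟨(k : G), rfl⟩⟩, ?_⟩
      have : (z : G) = (k : G) * c * (k : G)⁻¹ := by rw [← hk]; push_cast; rfl
      rw [this, hcdef]
      group
    have hfin : (conjugatesOf (⟨c, hcH⟩ : H)).Finite :=
      Set.Finite.of_finite_image (hS.subset hsub) Subtype.coe_injective.injOn
    have hc0 : c = 1 := by
      by_contra hne
      exact hHconj (⟨c, hcH⟩ : H) (by simpa [Subtype.ext_iff] using hne) hfin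
    have e' : h * g * h⁻¹ * g⁻¹ = 1 := by rw [← hc0, hcdef]; group
    rw [mul_inv_eq_one, mul_inv_eq_iff_eq_mul] at e'
    exact e'.symm
  -- `g` is central
  have hcen : g ∈ Subgroup.center G := by
    rw [Subgroup.mem_center_iff]
    intro x
    by_cases hx : x ∈ H
    · exact (hcomm x hx).symm
    · have hxg : x * g⁻¹ ∈ H := by
        rw [Subgroup.mul_mem_iff_of_index_two hidx]
        simp [hx, hgH]
      have h1 := hcomm _ hxg
      calc x * g = (x * g⁻¹) * g * g := by group
        _ = g * (x * g⁻¹) * g := by rw [← h1]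
        _ = g * x := by group
  have gcomm : ∀ a : G, g * a = a * g := fun a => (Subgroup.mem_center_iff.mp hcen a).symm
  -- g has order two
  have hg2H : g ^ 2 ∈ H := Subgroup.sq_mem_of_index_two hidx g
  have hg2 : g ^ 2 = 1 := by
    by_contra hne
    have hinf := hHconj (⟨g ^ 2, hg2H⟩ : H) (by simpa [Subtype.ext_iff] using hne)
    have hsub : conjugatesOf (⟨g ^ 2, hg2H⟩ : H) ⊆ {(⟨g ^ 2, hg2H⟩ : H)} := by
      rintro z hz
      obtain ⟨k, hk⟩ := isConj_iff.mp hz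
      rw [← hk]
      have cm : Commute g (k : G) := hcomm (k : G) k.2
      have : (k : G) * g ^ 2 * (k : G)⁻¹ = g ^ 2 := by
        rw [← (cm.pow_left 2).eq, mul_inv_cancel_right]
      simp only [Set.mem_singleton_iff, Subtype.ext_iff]
      push_cast
      exact this
    exact hinf ((Set.finite_singleton _).subset hsub)
  have hmulg : ∀ x : G, x ∉ H → x * g ∈ H := by
    intro x hx
    rw [Subgroup.mul_mem_iff_of_index_two hidx]
    simp [hx, hgH]
  have hgg : g * g = 1 := by rw [← pow_two]; exact hg2
  -- build the isomorphism
  refine ⟨g, hg1, hg2, hcen, hgH, ⟨?_⟩⟩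
  let φ : G →* H × Multiplicative (ZMod 2) :=
  { toFun := fun x =>
      (if hx : x ∈ H then ⟨x, hx⟩ else ⟨x * g, hmulg x hx⟩,
        Multiplicative.ofAdd (if x ∈ H then 0 else 1))
    map_one' := by simp [Prod.ext_iff, H.one_mem]
    map_mul' := by
      intro x y
      by_cases hx : x ∈ H <;> by_cases hy : y ∈ H
      · have hxy : x * y ∈ H := H.mul_mem hx hy
        simp [hx, hy, hxy, Prod.ext_iff, Subtype.ext_iff]
      · have hxy : x * y ∉ H := by
          rw [Subgroup.mul_mem_iff_of_index_two hidx]; simp [hx, hy]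
        simp [hx, hy, hxy, Prod.ext_iff, Subtype.ext_iff, mul_assoc, ← ofAdd_add]
      · have hxy : x * y ∉ H := by
          rw [Subgroup.mul_mem_iff_of_index_two hidx]; simp [hx, hy]
        have : x * y * g = x * g * y := by
          rw [mul_assoc, ← gcomm y, ← mul_assoc]
        simp [hx, hy, hxy, Prod.ext_iff, Subtype.ext_iff, this, ← ofAdd_add]
      · have hxy : x * y ∈ H := by
          rw [Subgroup.mul_mem_iff_of_index_two hidx]; simp [hx, hy]
        have : x * g * (y * g) = x * y := by
          rw [mul_assoc, ← mul_assoc g y, gcomm y, mul_assoc, hgg, mul_one]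
        simp [hx, hy, hxy, Prod.ext_iff, Subtype.ext_iff, this, ← ofAdd_add]
        decide }
  have hinj : Function.Injective φ := by
    intro a b hab
    rw [Prod.ext_iff] at hab
    obtain ⟨h1, h2⟩ := hab
    by_cases ha : a ∈ H <;> by_cases hb : b ∈ H
    · simpa [φ, ha, hb, Subtype.ext_iff] using h1
    · exfalso
      simp only [φ, ha, hb, if_true, if_false, MonoidHom.coe_mk, OneHom.coe_mk] at h2
      exact absurd (Multiplicative.ofAdd.injective h2) (by decide)
    · exfalso
      simp only [φ, ha, hb, if_true, if_false, MonoidHom.coe_mk, OneHom.coe_mk] at h2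
      exact absurd (Multiplicative.ofAdd.injective h2) (by decide)
    · have := h1
      simp only [φ, ha, hb, dif_neg, MonoidHom.coe_mk, OneHom.coe_mk, Subtype.ext_iff] at this
      exact mul_right_cancel this
  have hsurj : Function.Surjective φ := by
    rintro ⟨h, t⟩
    have ht : t.toAdd = 0 ∨ t.toAdd = 1 := by
      have : ∀ z : ZMod 2, z = 0 ∨ z = 1 := by decide
      exact this _
    rcases ht with ht | ht
    · refine ⟨(h : G), ?_⟩
      have hh : (h : G) ∈ H := h.2
      have : t = Multiplicative.ofAdd 0 := by
        rw [← ofAdd_toAdd t, ht]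
      simp [φ, hh, Prod.ext_iff, this]
    · refine ⟨(h : G) * g, ?_⟩
      have hh : (h : G) * g ∉ H := by
        rw [Subgroup.mul_mem_iff_of_index_two hidx]
        simp [h.2, hgH]
      have ht' : t = Multiplicative.ofAdd 1 := by
        rw [← ofAdd_toAdd t, ht]
      have : (h : G) * g * g = (h : G) := by rw [mul_assoc, hgg, mul_one]
      simp [φ, hh, Prod.ext_iff, Subtype.ext_iff, this, ht']
  exact MulEquiv.ofBijective φ ⟨hinj, hsurj⟩
end

section
/- Let G be a group and H a subgroup of finite index in G whose center is infinite. Then H contains a subgroup N such that N is normal in G, N has finite index in G, and the center of N is infinite. -/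
/-- If `H` is a subgroup of finite index of a group `G` whose center is infinite, then `H`
contains a subgroup `N` which is normal in `G`, of finite index in `G`, and whose center
is infinite. -/
theorem exists_normal_finiteIndex_infinite_center {G : Type*} [Group G]
    (H : Subgroup G) (hidx : H.index ≠ 0) (hZ : Infinite (Subgroup.center H)) :
    ∃ N : Subgroup G, N ≤ H ∧ N.Normal ∧ N.index ≠ 0 ∧
      Infinite (Subgroup.center N) := by
  haveI : H.FiniteIndex := ⟨hidx⟩
  set N := H.normalCore with hN
  refine ⟨N, H.normalCore_le, H.normalCore_normal, Subgroup.FiniteIndex.index_ne_zero, ?_⟩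
  set Z := Subgroup.center H with hZdef
  set M := (N.subgroupOf H).subgroupOf Z with hM
  haveI : Infinite M := by
    by_contra hfin
    rw [not_infinite_iff_finite] at hfin
    haveI : Finite (Z ⧸ M) := Subgroup.finite_quotient_of_finiteIndex
    haveI : Finite Z := Finite.of_equiv _ (Subgroup.groupEquivQuotientProdSubgroup (s := M)).symm
    exact not_finite Z
  refine Infinite.of_injective (β := M)
    (fun x => ⟨⟨((x : Z) : H), x.2⟩, ?_⟩) ?_
  · rw [Subgroup.mem_center_iff]
    intro m
    have hc : ((x : Z) : H) ∈ Subgroup.center H := (x : Z).2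
    have := (Subgroup.mem_center_iff.mp hc) ⟨m.1, H.normalCore_le m.2⟩
    ext
    simpa using congrArg Subtype.val this
  · intro a b hab
    have h1 : (((a : Z) : H) : G) = (((b : Z) : H) : G) :=
      congrArg (fun y => ((y : Subgroup.center N) : N).1) hab
    exact Subtype.ext (Subtype.ext (Subtype.ext h1))
end

section
/- Let G be a group containing an element g of infinite order whose centralizer Z_G(g) has finite index in G. Then G contains a subgroup K that is abelian, finitely generated, infinite, and normal in G. -/
/-- If a group `G` contains an element `g` of infinite order whose centralizer has finite
index in `G`, then `G` contains a subgroup `K` which is abelian, finitely generated,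
infinite, and normal in `G`. -/
theorem exists_abelian_fg_infinite_normal_subgroup {G : Type*} [Group G]
    (g : G) (hg : ¬ IsOfFinOrder g)
    (hidx : (Subgroup.centralizer {g}).index ≠ 0) :
    ∃ K : Subgroup G, (∀ a b : K, a * b = b * a) ∧ K.FG ∧ Infinite K ∧ K.Normal := by
  haveI hCfi : (Subgroup.centralizer {g}).FiniteIndex := ⟨hidx⟩
  set C := Subgroup.centralizer {g} with hC
  set N := C.normalCore with hN
  haveI : N.Normal := Subgroup.normalCore_normal C
  haveI hNfi : N.FiniteIndex := Subgroup.finiteIndex_normalCore C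
  set m := N.index with hm
  have hm0 : m ≠ 0 := hNfi.index_ne_zero
  have hgmN : g ^ m ∈ N := Subgroup.pow_index_mem N g
  -- g^m has infinite order
  have hgm : ¬ IsOfFinOrder (g ^ m) := fun h => hg (h.of_pow hm0)
  -- the conjugacy class of g^m
  set s : Set G := Group.conjugatesOfSet {g ^ m} with hs
  set K : Subgroup G := Subgroup.normalClosure {g ^ m} with hK
  have hKs : K = Subgroup.closure s := rfl
  -- every conjugate of g^m lies in N and centralizes N
  have hconjN : s ⊆ (N : Set G) := Group.conjugatesOfSet_subset (by
    intro x hx; rcases hx with rfl; exact hgmN)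
  have hconjC : ∀ x ∈ s, ∀ n ∈ N, n * x = x * n := by
    intro x hx n hn
    rcases Group.mem_conjugatesOfSet_iff.1 hx with ⟨a, ha, hconj⟩
    rcases ha with rfl
    rcases isConj_iff.1 hconj with ⟨c, rfl⟩
    have hn' : c⁻¹ * n * c ∈ N := by
      have := Subgroup.Normal.conj_mem ‹N.Normal› n hn c⁻¹
      simpa using this
    have hg1 : Commute (c⁻¹ * n * c) g :=
      Subgroup.mem_centralizer_singleton_iff.1 (Subgroup.normalCore_le C hn')
    have hcomm : Commute (c⁻¹ * n * c) (g ^ m) := hg1.pow_right m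
    have : (c⁻¹ * n * c) * g ^ m = g ^ m * (c⁻¹ * n * c) := hcomm
    calc n * (c * g ^ m * c⁻¹) = c * ((c⁻¹ * n * c) * g ^ m) * c⁻¹ := by group
      _ = c * (g ^ m * (c⁻¹ * n * c)) * c⁻¹ := by rw [this]
      _ = (c * g ^ m * c⁻¹) * n := by group
  -- generators pairwise commute
  have hcomm : ∀ x ∈ s, ∀ y ∈ s, x * y = y * x := fun x hx y hy =>
    hconjC y hy x (hconjN hx)
  -- the conjugacy class is finite
  haveI : (Subgroup.centralizer {g ^ m}).FiniteIndex := by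
    refine Subgroup.finiteIndex_of_le (H := C) ?_
    intro x hx
    exact Subgroup.mem_centralizer_singleton_iff.2
      ((Commute.pow_right (Subgroup.mem_centralizer_singleton_iff.1 hx) m))
  have hsfin : s.Finite := by
    haveI : Finite (G ⧸ Subgroup.centralizer {g ^ m}) := inferInstance
    have hsub : s ⊆ Set.range (fun q : G ⧸ Subgroup.centralizer {g ^ m} =>
        Quotient.liftOn' q (fun a => a * g ^ m * a⁻¹) (by
          intro a b hab
          have hab' : a⁻¹ * b ∈ Subgroup.centralizer {g ^ m} :=
            QuotientGroup.leftRel_apply.1 hab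
          have h1 : (g ^ m) * (a⁻¹ * b) = (a⁻¹ * b) * (g ^ m) :=
            Subgroup.mem_centralizer_iff.1 hab' _ rfl
          have h2 : (a⁻¹ * b) * g ^ m * (a⁻¹ * b)⁻¹ = g ^ m := by
            rw [← h1]; group
          have h3 : b * g ^ m * b⁻¹ = a * ((a⁻¹ * b) * g ^ m * (a⁻¹ * b)⁻¹) * a⁻¹ := by
            group
          show a * g ^ m * a⁻¹ = b * g ^ m * b⁻¹
          rw [h3, h2])) := by
      intro x hx
      rcases Group.mem_conjugatesOfSet_iff.1 hx with ⟨a, ha, hconj⟩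
      rcases ha with rfl
      rcases isConj_iff.1 hconj with ⟨c, rfl⟩
      exact ⟨QuotientGroup.mk c, rfl⟩
    exact (Set.finite_range _).subset hsub
  refine ⟨K, ?_, ?_, ?_, Subgroup.normalClosure_normal⟩
  · -- abelian
    intro a b
    have hmem := Subgroup.closure_le_centralizer_centralizer s
    exact Subtype.ext <|
      Set.centralizer_centralizer_comm_of_comm hcomm _ (hmem a.2) _ (hmem b.2)
  · -- finitely generated
    exact (Subgroup.fg_iff K).2 ⟨s, hKs.symm, hsfin⟩
  · -- infinite
    have hgmK : g ^ m ∈ K := Subgroup.subset_normalClosure rfl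
    have hinj : Function.Injective (fun n : ℤ => ((g ^ m) ^ n : G)) :=
      injective_zpow_iff_not_isOfFinOrder.2 hgm
    refine Infinite.of_injective (fun n : ℤ => (⟨(g ^ m) ^ n, K.zpow_mem hgmK n⟩ : K)) ?_
    intro n₁ n₂ h
    exact hinj (congrArg Subtype.val h)
end

section
/- Let Γ₁ and Γ₂ be groups with |Γ₁| ≥ 3 and |Γ₂| ≥ 2 (Γ₁ has at least three elements and Γ₂ has at least two elements). Then the free product Γ = Γ₁ ∗ Γ₂ is ICC. -/
open Monoid CoprodI List

set_option linter.unusedSectionVars false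

namespace ICCAux

universe u

variable {G : Bool → Type u} [∀ b, Group (G b)]

/-- `[p, q, p, q, ...]` with `2 * n` letters. -/
def rep2 (p q : Σ b, G b) : ℕ → List (Σ b, G b)
  | 0 => []
  | n + 1 => p :: q :: rep2 p q n

@[simp] lemma length_rep2 (p q : Σ b, G b) : ∀ n, (rep2 p q n).length = 2 * n
  | 0 => rfl
  | n + 1 => by simp [rep2, length_rep2 p q n]; omega

lemma mem_rep2 {p q l : Σ b, G b} : ∀ {n}, l ∈ rep2 p q n → l = p ∨ l = q
  | 0, h => by simp [rep2] at h
  | n + 1, h => by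
      simp only [rep2, List.mem_cons] at h
      rcases h with rfl | rfl | h
      exacts [Or.inl rfl, Or.inr rfl, mem_rep2 h]

lemma chain'_rep2 {p q : Σ b, G b} (hpq : p.1 ≠ q.1) :
    ∀ n, (rep2 p q n).Chain' (fun l l' => l.1 ≠ l'.1) ∧
      (q :: rep2 p q n).Chain' (fun l l' => l.1 ≠ l'.1)
  | 0 => by simp [rep2, List.Chain']
  | n + 1 => by
      obtain ⟨h1, h2⟩ := chain'_rep2 hpq n
      refine ⟨?_, ?_⟩
      · exact List.isChain_cons_cons.2 ⟨hpq, h2⟩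
      · exact List.isChain_cons_cons.2 ⟨hpq.symm, List.isChain_cons_cons.2 ⟨hpq, h2⟩⟩

@[simp] lemma head?_rep2 (p q : Σ b, G b) (n : ℕ) : (rep2 p q (n + 1)).head? = some p := rfl

lemma getLast?_rep2 (p q : Σ b, G b) : ∀ n, (rep2 p q (n + 1)).getLast? = some q
  | 0 => rfl
  | n + 1 => by
      show (p :: q :: rep2 p q (n + 1)).getLast? = some q
      rw [List.getLast?_cons_cons]
      cases n with
      | zero => rfl
      | succ m =>
        show (q :: rep2 p q (m + 1 + 1)).getLast? = some q
        show (q :: p :: q :: rep2 p q (m + 1)).getLast? = some q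
        rw [List.getLast?_cons_cons]
        exact getLast?_rep2 p q (m + 1)

lemma prod_rep2 (p q : Σ b, G b) :
    ∀ n, ((rep2 p q n).map fun l => CoprodI.of l.2).prod
      = (CoprodI.of p.2 * CoprodI.of q.2) ^ n
  | 0 => by simp [rep2]
  | n + 1 => by
      rw [rep2]
      simp only [List.map_cons, List.prod_cons, prod_rep2 p q n, pow_succ']
      rw [mul_assoc]

end ICCAux

namespace ICCAux

variable {G : Bool → Type u} [∀ b, Group (G b)]

lemma not_ne (i : Bool) : (!i) ≠ i := by cases i <;> simp

/-- Key lemma: if `g` is represented by a nonempty reduced word whose first and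
last letters lie in the same factor, then the conjugacy class of `g` is infinite. -/
lemma conj_infinite_of_ends_eq (w : Word G) (hne : w.toList ≠ []) (i : Bool)
    (hhead : (w.toList.head hne).1 = i) (hlast : (w.toList.getLast hne).1 = i)
    (u : G i) (v : G (!i)) (hu : u ≠ 1) (hv : v ≠ 1) :
    (conjugatesOf w.prod).Infinite := by
  classical
  have hpq : (⟨i, u⟩ : Σ b, G b).1 ≠ (⟨!i, v⟩ : Σ b, G b).1 := (not_ne i).symm
  have hpq' : (⟨!i, v⁻¹⟩ : Σ b, G b).1 ≠ (⟨i, u⁻¹⟩ : Σ b, G b).1 := not_ne i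
  have hgetLast : w.toList.getLast? = some (w.toList.getLast hne) :=
    List.getLast?_eq_getLast hne
  have hhead? : w.toList.head? = some (w.toList.head hne) := List.head?_eq_head hne
  have chainW : ∀ n : ℕ,
      (rep2 ⟨i, u⟩ ⟨!i, v⟩ (n + 1) ++ w.toList ++ rep2 ⟨!i, v⁻¹⟩ ⟨i, u⁻¹⟩ (n + 1)).Chain'
      (fun l l' => l.1 ≠ l'.1) := by
    intro n
    refine List.IsChain.append (List.IsChain.append ((chain'_rep2 hpq (n+1)).1) w.chain_ne ?_)
      ((chain'_rep2 hpq' (n+1)).1) ?_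
    · intro x hx y hy
      rw [getLast?_rep2, Option.mem_def, Option.some_inj] at hx
      rw [hhead?, Option.mem_def, Option.some_inj] at hy
      subst hx; subst hy
      show (!i) ≠ (w.toList.head hne).1
      rw [hhead]; exact not_ne i
    · intro x hx y hy
      rw [List.getLast?_append_of_ne_nil _ hne, hgetLast, Option.mem_def, Option.some_inj] at hx
      rw [head?_rep2, Option.mem_def, Option.some_inj] at hy
      subst hx; subst hy
      show (w.toList.getLast hne).1 ≠ !i
      rw [hlast]; exact (not_ne i).symm
  have neoneW : ∀ n : ℕ,
      ∀ l ∈ rep2 ⟨i, u⟩ ⟨!i, v⟩ (n + 1) ++ w.toList ++ rep2 ⟨!i, v⁻¹⟩ ⟨i, u⁻¹⟩ (n + 1),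
      l.2 ≠ (1 : G l.1) := by
    intro n l hl
    rcases List.mem_append.1 hl with hl | hl
    · rcases List.mem_append.1 hl with hl | hl
      · rcases mem_rep2 hl with rfl | rfl
        · exact hu
        · exact hv
      · exact w.ne_one l hl
    · rcases mem_rep2 hl with rfl | rfl
      · exact inv_ne_one.2 hv
      · exact inv_ne_one.2 hu
  set x : CoprodI G := CoprodI.of u * CoprodI.of v with hx
  set f : ℕ → CoprodI G := fun n => x ^ (n + 1) * w.prod * (x ^ (n + 1))⁻¹ with hf
  set W : ℕ → Word G := fun n =>
    ⟨rep2 ⟨i, u⟩ ⟨!i, v⟩ (n + 1) ++ w.toList ++ rep2 ⟨!i, v⁻¹⟩ ⟨i, u⁻¹⟩ (n + 1),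
      neoneW n, chainW n⟩ with hW
  have prodW : ∀ n, (W n).prod = f n := by
    intro n
    show ((rep2 ⟨i, u⟩ ⟨!i, v⟩ (n + 1) ++ w.toList ++ rep2 ⟨!i, v⁻¹⟩ ⟨i, u⁻¹⟩ (n + 1)).map
      fun l => CoprodI.of l.2).prod = _
    rw [List.map_append, List.map_append, List.prod_append, List.prod_append,
      prod_rep2, prod_rep2]
    have h2 : (CoprodI.of (M := G) v⁻¹ * CoprodI.of (M := G) u⁻¹) = x⁻¹ := by
      rw [hx, mul_inv_rev]
      simp [map_inv]
    show (CoprodI.of u * CoprodI.of v) ^ (n + 1) * (w.toList.map fun l => CoprodI.of l.2).prod *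
      (CoprodI.of v⁻¹ * CoprodI.of u⁻¹) ^ (n + 1) = _
    rw [h2, inv_pow, ← hx]
    rfl
  have prodinj : Function.Injective (Word.prod (M := G)) := by
    intro w₁ w₂ h
    have h' : Word.equiv.symm w₁ = Word.equiv.symm w₂ := h
    exact Word.equiv.symm.injective h'
  refine Set.infinite_of_injective_forall_mem (f := f) ?_ ?_
  · intro n m hnm
    have hWnm : W n = W m := prodinj (by rw [prodW, prodW, hnm])
    have hlen := congrArg (fun w : Word G => w.toList.length) hWnm
    simp only [hW, List.length_append, length_rep2] at hlen
    omega
  · intro n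
    exact isConj_iff.2 ⟨x ^ (n + 1), rfl⟩

end ICCAux

namespace ICCAux

variable {G : Bool → Type u} [∀ b, Group (G b)]

lemma step_last (w : Word G) (hne : w.toList ≠ []) (j : Bool) (m : G j)
    (hlast : w.toList.getLast hne = ⟨j, m⟩)
    (hhead : (w.toList.head hne).1 ≠ j)
    (v : G j) (hv1 : v ≠ 1) (hvm : v ≠ m) :
    ∃ (w' : Word G) (hne' : w'.toList ≠ []),
      w'.prod = CoprodI.of v * w.prod * (CoprodI.of v)⁻¹ ∧
      (w'.toList.head hne').1 = j ∧ (w'.toList.getLast hne').1 = j := by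
  classical
  set D := w.toList.dropLast with hD
  have hsplit : D ++ [(⟨j, m⟩ : Σ b, G b)] = w.toList := by
    rw [hD, ← hlast]
    exact List.dropLast_append_getLast hne
  have hDne : D ≠ [] := by
    intro h
    rw [h] at hsplit
    have : w.toList.head hne = ⟨j, m⟩ := by
      have := congrArg (fun l => l.head?) hsplit
      simp only [List.nil_append, List.head?_cons, List.head?_eq_head hne] at this
      exact (Option.some_inj.1 this).symm
    exact hhead (by rw [this])
  have hheadD : D.head? = w.toList.head? := by
    conv_rhs => rw [← hsplit]
    exact (List.head?_append_of_ne_nil _ hDne).symm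
  have hchain : w.toList.Chain' (fun l l' => l.1 ≠ l'.1) := w.chain_ne
  rw [← hsplit] at hchain
  replace hchain := List.isChain_append.1 hchain
  obtain ⟨hchainD, -, hjunc⟩ := hchain
  set L' : List (Σ b, G b) := ⟨j, v⟩ :: (D ++ [⟨j, m * v⁻¹⟩]) with hL'
  have hchain' : L'.Chain' (fun l l' => l.1 ≠ l'.1) := by
    rw [hL']; apply List.isChain_cons.2
    constructor
    · intro y hy
      rw [List.head?_append_of_ne_nil _ hDne, hheadD, List.head?_eq_head hne,
        Option.mem_def, Option.some_inj] at hy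
      subst hy
      exact fun h => hhead h.symm
    · rw [List.isChain_append]
      refine ⟨hchainD, List.isChain_singleton _, ?_⟩
      intro x hx y hy
      simp only [List.head?_cons, Option.mem_def, Option.some_inj] at hy
      subst hy
      exact hjunc x hx ⟨j, m⟩ (by simp)
  have hneone : ∀ l ∈ L', l.2 ≠ (1 : G l.1) := by
    intro l hl
    rcases List.mem_cons.1 hl with rfl | hl
    · exact hv1
    · rcases List.mem_append.1 hl with hl | hl
      · exact w.ne_one l (by rw [← hsplit]; exact List.mem_append_left _ hl)
      · rcases List.mem_singleton.1 hl with rfl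
        simp only [ne_eq, mul_inv_eq_one]
        exact fun h => hvm (h.symm)
  refine ⟨⟨L', hneone, hchain'⟩, by simp [hL'], ?_, ?_, ?_⟩
  · show ((L'.map fun l => CoprodI.of l.2).prod) = _
    have hwprod : w.prod = (D.map fun l => CoprodI.of l.2).prod * CoprodI.of m := by
      show (w.toList.map fun l => CoprodI.of l.2).prod = _
      rw [← hsplit]
      simp
    rw [hL']
    simp only [List.map_cons, List.map_append, List.map_singleton, List.prod_cons,
      List.prod_append, List.prod_singleton]
    rw [hwprod, map_mul, map_inv]
    group
    simp
  · simp [hL']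
  · show (L'.getLast _).1 = j
    have h1 : L'.getLast? = some ⟨j, m * v⁻¹⟩ := by
      rw [hL', ← List.cons_append]
      exact List.getLast?_concat
    have h2 : L'.getLast? = some (L'.getLast (by simp [hL'])) := List.getLast?_eq_getLast _
    rw [h1] at h2
    rw [← Option.some_inj.1 h2]

end ICCAux

namespace ICCAux

variable {G : Bool → Type u} [∀ b, Group (G b)]

lemma getLast?_cons_ne_nil {α : Type*} {l : List α} (h : l ≠ []) (a : α) :
    (a :: l).getLast? = l.getLast? := by
  rw [List.getLast?_cons, List.getLast?_eq_getLast h]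
  rfl

lemma step_head (w : Word G) (hne : w.toList ≠ []) (i : Bool) (m : G i)
    (hhead : w.toList.head hne = ⟨i, m⟩)
    (hlast : (w.toList.getLast hne).1 ≠ i)
    (c : G i) (hc1 : c ≠ 1) (hcm : c * m ≠ 1) :
    ∃ (w' : Word G) (hne' : w'.toList ≠ []),
      w'.prod = CoprodI.of c * w.prod * (CoprodI.of c)⁻¹ ∧
      (w'.toList.head hne').1 = i ∧ (w'.toList.getLast hne').1 = i := by
  classical
  set T := w.toList.tail with hT
  have hsplit : (⟨i, m⟩ : Σ b, G b) :: T = w.toList := by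
    rw [hT, ← hhead]
    exact List.cons_head_tail hne
  have hTne : T ≠ [] := by
    intro h
    rw [h] at hsplit
    have h1 : w.toList.getLast? = some ⟨i, m⟩ := by rw [← hsplit]; rfl
    rw [List.getLast?_eq_getLast hne] at h1
    exact hlast (by rw [Option.some_inj.1 h1])
  have hlastT : T.getLast? = w.toList.getLast? := by
    conv_rhs => rw [← hsplit]
    exact (getLast?_cons_ne_nil hTne _).symm
  have hchain : w.toList.Chain' (fun l l' => l.1 ≠ l'.1) := w.chain_ne
  rw [← hsplit] at hchain; replace hchain := List.isChain_cons.1 hchain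
  obtain ⟨hjunc, hchainT⟩ := hchain
  set L' : List (Σ b, G b) := (⟨i, c * m⟩ :: T) ++ [⟨i, c⁻¹⟩] with hL'
  have hchain' : L'.Chain' (fun l l' => l.1 ≠ l'.1) := by
    rw [hL']; apply List.isChain_append.2
    refine ⟨List.isChain_cons.2 ⟨fun y hy => hjunc y hy, hchainT⟩, List.isChain_singleton _, ?_⟩
    intro x hx y hy
    simp only [List.head?_cons, Option.mem_def, Option.some_inj] at hy
    subst hy
    rw [getLast?_cons_ne_nil hTne, hlastT, List.getLast?_eq_getLast hne,
      Option.mem_def, Option.some_inj] at hx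
    subst hx
    exact hlast
  have hneone : ∀ l ∈ L', l.2 ≠ (1 : G l.1) := by
    intro l hl
    rcases List.mem_append.1 hl with hl | hl
    · rcases List.mem_cons.1 hl with rfl | hl
      · exact hcm
      · exact w.ne_one l (by rw [← hsplit]; exact List.mem_cons_of_mem _ hl)
    · rcases List.mem_singleton.1 hl with rfl
      exact inv_ne_one.2 hc1
  refine ⟨⟨L', hneone, hchain'⟩, by simp [hL'], ?_, ?_, ?_⟩
  · show ((L'.map fun l => CoprodI.of l.2).prod) = _
    have hwprod : w.prod = CoprodI.of m * (T.map fun l => CoprodI.of l.2).prod := by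
      show (w.toList.map fun l => CoprodI.of l.2).prod = _
      rw [← hsplit]
      simp
    rw [hL']
    simp only [List.map_cons, List.map_append, List.map_singleton, List.prod_cons,
      List.prod_append, List.prod_singleton]
    rw [hwprod, map_mul, map_inv]
    group
    simp
  · simp [hL']
  · show (L'.getLast _).1 = i
    have h1 : L'.getLast? = some ⟨i, c⁻¹⟩ := by
      rw [hL']
      exact List.getLast?_concat
    have h2 : L'.getLast? = some (L'.getLast (by simp [hL'])) := List.getLast?_eq_getLast _
    rw [h1] at h2
    rw [← Option.some_inj.1 h2]

end ICCAux

namespace ICCAux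

variable {G : Bool → Type u} [∀ b, Group (G b)]

lemma conj_infinite_aux (a b : G true) (ha : a ≠ 1) (hb : b ≠ 1) (hab : a ≠ b)
    (t : G false) (ht : t ≠ 1) (g : CoprodI G) (hg : g ≠ 1) :
    (conjugatesOf g).Infinite := by
  classical
  have elt : ∀ i : Bool, ∃ x : G i, x ≠ 1 := by
    intro i
    cases i
    exacts [⟨t, ht⟩, ⟨a, ha⟩]
  have pick : ∀ y : G true, ∃ x : G true, x ≠ 1 ∧ x ≠ y := by
    intro y
    by_cases h : y = a
    · exact ⟨b, hb, by rw [h]; exact fun hh => hab hh.symm⟩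
    · exact ⟨a, ha, fun hh => h hh.symm⟩
  set w : Word G := Word.equiv g with hwdef
  have hw : w.prod = g := by
    show Word.equiv.symm (Word.equiv g) = g
    exact Word.equiv.symm_apply_apply g
  have hne : w.toList ≠ [] := by
    intro h
    apply hg
    rw [← hw]
    show (w.toList.map fun l => CoprodI.of l.2).prod = 1
    rw [h]
    rfl
  by_cases hij : (w.toList.head hne).1 = (w.toList.getLast hne).1
  · obtain ⟨u, hu⟩ := elt (w.toList.head hne).1
    obtain ⟨v, hv⟩ := elt (!(w.toList.head hne).1)
    have := conj_infinite_of_ends_eq w hne (w.toList.head hne).1 rfl hij.symm u v hu hv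
    rwa [hw] at this
  · rcases hq : w.toList.getLast hne with ⟨j, mq⟩
    have hjlast : (w.toList.getLast hne).1 = j := by rw [hq]
    by_cases hj : j = true
    · subst hj
      obtain ⟨v, hv1, hvm⟩ := pick mq
      obtain ⟨w', hne', hprod, hh, hl⟩ :=
        step_last w hne true mq hq (by rw [hjlast] at hij; exact hij) v hv1 hvm
      obtain ⟨z, hz⟩ := elt (!true)
      have hinf := conj_infinite_of_ends_eq w' hne' true hh hl v z hv1 hz
      have hconj : IsConj g w'.prod :=
        isConj_iff.2 ⟨CoprodI.of v, by rw [hprod, hw]⟩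
      rwa [hconj.conjugatesOf_eq]
    · have hjf : j = false := by simpa using hj
      subst hjf
      rcases hp : w.toList.head hne with ⟨i2, mp⟩
      have hihead : (w.toList.head hne).1 = i2 := by rw [hp]
      have hi2 : i2 = true := by
        rw [hihead, hjlast] at hij
        cases i2
        · exact absurd rfl hij
        · rfl
      subst hi2
      obtain ⟨c, hc1, hcm⟩ := pick mp⁻¹
      have hcm' : c * mp ≠ 1 := fun h => hcm (eq_inv_of_mul_eq_one_left h)
      obtain ⟨w', hne', hprod, hh, hl⟩ :=
        step_head w hne true mp hp (by rw [hihead] at hij; exact Ne.symm hij) c hc1 hcm'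
      obtain ⟨z, hz⟩ := elt (!true)
      have hinf := conj_infinite_of_ends_eq w' hne' true hh hl c z hc1 hz
      have hconj : IsConj g w'.prod :=
        isConj_iff.2 ⟨CoprodI.of c, by rw [hprod, hw]⟩
      rwa [hconj.conjugatesOf_eq]

end ICCAux

namespace ICCAux

universe v

variable {Γ₁ : Type u} {Γ₂ : Type v} [Group Γ₁] [Group Γ₂]

/-- The two-factor family used to express `Γ₁ ∗ Γ₂` as an indexed free product. -/
def GG (Γ₁ : Type u) (Γ₂ : Type v) : Bool → Type (max u v) :=
  fun b => Bool.rec (ULift.{u} Γ₂) (ULift.{v} Γ₁) b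

instance : ∀ b, Group (GG Γ₁ Γ₂ b) := fun b => by
  cases b
  · exact inferInstanceAs (Group (ULift Γ₂))
  · exact inferInstanceAs (Group (ULift Γ₁))

/-- Forward map `Γ₁ ∗ Γ₂ →* CoprodI (GG Γ₁ Γ₂)`. -/
def toCoprodI : Coprod Γ₁ Γ₂ →* CoprodI (GG Γ₁ Γ₂) :=
  Coprod.lift
    ((CoprodI.of (i := true)).comp (MulEquiv.ulift.symm : Γ₁ ≃* ULift Γ₁).toMonoidHom)
    ((CoprodI.of (i := false)).comp (MulEquiv.ulift.symm : Γ₂ ≃* ULift Γ₂).toMonoidHom)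

/-- Backward map. -/
def ofCoprodI : CoprodI (GG Γ₁ Γ₂) →* Coprod Γ₁ Γ₂ :=
  CoprodI.lift fun b =>
    match b with
    | true => Coprod.inl.comp (MulEquiv.ulift : ULift Γ₁ ≃* Γ₁).toMonoidHom
    | false => Coprod.inr.comp (MulEquiv.ulift : ULift Γ₂ ≃* Γ₂).toMonoidHom

/-- `Γ₁ ∗ Γ₂` is isomorphic to the indexed free product over `Bool`. -/
def coprodEquivCoprodI : Coprod Γ₁ Γ₂ ≃* CoprodI (GG Γ₁ Γ₂) :=
  MonoidHom.toMulEquiv toCoprodI ofCoprodI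
    (by
      apply Coprod.hom_ext <;> ext x <;>
        simp [toCoprodI, ofCoprodI] <;> rfl)
    (by
      apply CoprodI.ext_hom
      rintro (_ | _) <;> ext x <;>
        simp [toCoprodI, ofCoprodI, MulEquiv.ulift] <;> rfl)

end ICCAux


/-- The free product `Γ₁ ∗ Γ₂` of a group with at least three elements and a group with
at least two elements is ICC. -/
theorem isICC_coprod {Γ₁ Γ₂ : Type*} [Group Γ₁] [Group Γ₂]
    (h₁ : 3 ≤ Cardinal.mk Γ₁) (h₂ : 2 ≤ Cardinal.mk Γ₂) :
    IsICC (Monoid.Coprod Γ₁ Γ₂) := by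
  classical
  obtain ⟨a, ha1, -⟩ := Cardinal.three_le h₁ 1 1
  obtain ⟨b, hb1, hba⟩ := Cardinal.three_le h₁ 1 a
  have hnt : Nontrivial Γ₂ :=
    Cardinal.one_lt_iff_nontrivial.1 (lt_of_lt_of_le (by norm_num) h₂)
  obtain ⟨t, ht1⟩ := exists_ne (1 : Γ₂)
  set e : Monoid.Coprod Γ₁ Γ₂ ≃* Monoid.CoprodI (ICCAux.GG Γ₁ Γ₂) :=
    ICCAux.coprodEquivCoprodI with he
  have key : ∀ g : Monoid.CoprodI (ICCAux.GG Γ₁ Γ₂), g ≠ 1 → (conjugatesOf g).Infinite := by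
    intro g hg
    refine ICCAux.conj_infinite_aux (ULift.up a) (ULift.up b)
      (fun h => ha1 (congrArg ULift.down h)) (fun h => hb1 (congrArg ULift.down h))
      (fun h => hba (congrArg ULift.down h).symm) (ULift.up t)
      (fun h => ht1 (congrArg ULift.down h)) g hg
  have hinfty : Infinite (Monoid.CoprodI (ICCAux.GG Γ₁ Γ₂)) := by
    have hg1 : (Monoid.CoprodI.of (i := true) (ULift.up a) :
        Monoid.CoprodI (ICCAux.GG Γ₁ Γ₂)) ≠ 1 := by
      intro h
      apply ha1
      have := Monoid.CoprodI.of_injective (M := ICCAux.GG Γ₁ Γ₂) true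
        (h.trans (map_one (Monoid.CoprodI.of (i := true))).symm)
      exact congrArg ULift.down this
    have hinf := key _ hg1
    haveI := hinf.to_subtype
    exact Infinite.of_injective
      (Subtype.val : (conjugatesOf (Monoid.CoprodI.of (i := true) (ULift.up a))) → _)
      Subtype.val_injective
  constructor
  · exact Infinite.of_injective e.symm e.symm.injective
  · intro g hg
    have hge : e g ≠ 1 := fun h => hg (by rwa [MulEquiv.map_eq_one_iff e] at h)
    have hinf := key (e g) hge
    have himg := hinf.image (e.symm.injective.injOn)
    refine himg.mono ?_
    rintro _ ⟨x, hx, rfl⟩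
    have hx' : IsConj (e g) x := hx
    have h2 := e.symm.toMonoidHom.map_isConj hx'
    have h3 : IsConj g (e.symm x) := by simpa using h2
    exact h3
end

section
/- Let Γ₁ be a group, let Γ₀ and Γ₀′ be two subgroups of Γ₁ at least one of which is a proper subgroup of Γ₁, let φ : Γ₀ → Γ₀′ be an isomorphism, and let Γ be the corresponding HNN extension of Γ₁ over φ. If Γ₁ is ICC, then Γ is ICC. -/
section Aux

open HNNExtension HNNExtension.NormalWord List

variable {G : Type*} [Group G] {A B : Subgroup G} {φ : A ≃* B}

private def conjList (w : ReducedWord G A B) (hl : w.toList ≠ []) (v : ℤˣ) (r : G) (k : ℕ) :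
    List (ℤˣ × G) :=
  (List.replicate k (v, (1 : G)) ++ [(v, r * w.head)]) ++
    ((w.toList.dropLast ++ [((w.toList.getLast hl).1, (w.toList.getLast hl).2 * r⁻¹)]) ++
      List.replicate (k + 1) (-v, (1 : G)))

private theorem conjList_map_fst (w : ReducedWord G A B) (hl : w.toList ≠ []) (v : ℤˣ) (r : G)
    (k : ℕ) :
    (conjList w hl v r k).map Prod.fst =
      (List.replicate k v ++ [v]) ++ (w.toList.map Prod.fst ++ List.replicate (k + 1) (-v)) := by
  have h1 : w.toList.map Prod.fst
      = (w.toList.dropLast ++ [w.toList.getLast hl]).map Prod.fst := by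
    rw [List.dropLast_append_getLast]
  rw [conjList, h1]
  simp

private theorem chain_middle (w : ReducedWord G A B) (hl : w.toList ≠ []) (r : G) :
    (w.toList.dropLast ++ [((w.toList.getLast hl).1, (w.toList.getLast hl).2 * r⁻¹)]).IsChain
      (fun a b => a.2 ∈ toSubgroup A B a.1 → a.1 = b.1) := by
  have hc := w.chain
  rw [← List.dropLast_append_getLast hl, List.isChain_append] at hc
  rw [List.isChain_append]
  refine ⟨hc.1, List.isChain_singleton _, ?_⟩
  intro x hx y hy
  simp only [List.head?_cons, Option.mem_def, Option.some.injEq] at hy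
  subst hy
  exact fun hm => hc.2.2 x hx (w.toList.getLast hl) (by simp) hm

private theorem conjList_chain (w : ReducedWord G A B) (hl : w.toList ≠ []) (v : ℤˣ) (r : G)
    (k : ℕ)
    (hJ1 : r * w.head ∈ toSubgroup A B v → v = (w.toList.head hl).1)
    (hJ2 : (w.toList.getLast hl).2 * r⁻¹ ∈ toSubgroup A B (w.toList.getLast hl).1 →
      (w.toList.getLast hl).1 = -v) :
    (conjList w hl v r k).IsChain (fun a b => a.2 ∈ toSubgroup A B a.1 → a.1 = b.1) := by
  have hmfst : (w.toList.dropLast ++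
      [((w.toList.getLast hl).1, (w.toList.getLast hl).2 * r⁻¹)]).map Prod.fst
      = w.toList.map Prod.fst := by
    conv_rhs => rw [← List.dropLast_append_getLast hl]
    simp
  have hhead : ∀ y ∈ (w.toList.dropLast ++
      [((w.toList.getLast hl).1, (w.toList.getLast hl).2 * r⁻¹)]).head?,
      y.1 = (w.toList.head hl).1 := by
    intro y hy
    have h2 : ((w.toList.dropLast ++
        [((w.toList.getLast hl).1, (w.toList.getLast hl).2 * r⁻¹)]).map Prod.fst).head?
        = some y.1 := by
      rw [List.head?_map, hy]
      rfl
    rw [hmfst, List.head?_map, List.head?_eq_head hl] at h2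
    simpa using h2.symm
  rw [conjList, List.isChain_append]
  refine ⟨?_, ?_, ?_⟩
  · -- replicate k (v,1) ++ [(v, r*head)]
    rw [List.isChain_append]
    refine ⟨List.isChain_replicate_of_rel _ (fun _ => rfl), List.isChain_singleton _, ?_⟩
    intro x hx y hy
    have hx' : x = (v, (1:G)) := List.eq_of_mem_replicate (List.mem_of_mem_getLast? hx)
    simp only [List.head?_cons, Option.mem_def, Option.some.injEq] at hy
    subst hy; rw [hx']
    exact fun _ => rfl
  · -- middle ++ replicate (k+1) (-v,1)
    rw [List.isChain_append]
    refine ⟨chain_middle w hl r, List.isChain_replicate_of_rel _ (fun _ => rfl), ?_⟩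
    intro x hx y hy
    have hx' : x = ((w.toList.getLast hl).1, (w.toList.getLast hl).2 * r⁻¹) := by
      rw [List.getLast?_append_of_ne_nil _ (by simp)] at hx
      simpa using hx.symm
    have hy' : y.1 = -v := by
      have := List.eq_of_mem_replicate (List.mem_of_mem_head? hy)
      rw [this]
    subst hx'
    intro hm
    rw [hy']
    exact hJ2 hm
  · -- junction between the two halves
    intro x hx y hy
    rw [List.getLast?_append_of_ne_nil _ (by simp)] at hx
    simp only [List.getLast?_singleton, Option.mem_def, Option.some.injEq] at hx
    subst hx
    have hy1 : y.1 = (w.toList.head hl).1 := by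
      rw [List.head?_append_of_ne_nil] at hy
      · exact hhead y hy
      · simp
    intro hm
    rw [hy1]
    exact hJ1 hm

private theorem conjList_prod (w : ReducedWord G A B) (hl : w.toList ≠ []) (v : ℤˣ) (r : G)
    (k : ℕ) (hchain : (conjList w hl v r k).IsChain
      (fun a b => a.2 ∈ toSubgroup A B a.1 → a.1 = b.1)) :
    (ReducedWord.mk 1 (conjList w hl v r k) hchain).prod φ =
      (t ^ ((v : ℤ) * (k+1)) * of r) * w.prod φ * (t ^ ((v : ℤ) * (k+1)) * of r)⁻¹ := by
  have hrhs : w.prod φ = of w.head *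
      ((w.toList.dropLast.map fun x => t ^ (x.1 : ℤ) * of x.2).prod *
        (t ^ (((w.toList.getLast hl).1 : ℤ)) * of (w.toList.getLast hl).2)) := by
    rw [ReducedWord.prod]
    conv_lhs => rw [← List.dropLast_append_getLast hl]
    simp [mul_assoc]
  rw [hrhs]
  simp only [ReducedWord.prod, conjList, List.map_append, List.prod_append, List.map_replicate, List.prod_replicate,
    List.map_cons, List.map_nil, List.prod_cons, List.prod_nil, map_one, map_mul, map_inv,
    mul_one, one_mul, Units.val_neg]
  group

private theorem infinite_conj (w : ReducedWord G A B) (hl : w.toList ≠ []) (v : ℤˣ) (r : G)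
    (hJ1 : r * w.head ∈ toSubgroup A B v → v = (w.toList.head hl).1)
    (hJ2 : (w.toList.getLast hl).2 * r⁻¹ ∈ toSubgroup A B (w.toList.getLast hl).1 →
      (w.toList.getLast hl).1 = -v) :
    (conjugatesOf (w.prod φ)).Infinite := by
  apply Set.infinite_of_injective_forall_mem
    (f := fun k : ℕ => (ReducedWord.mk 1 (conjList w hl v r k)
      (conjList_chain w hl v r k hJ1 hJ2)).prod φ)
  case hi =>
    intro k k' hkk
    have hfst := (ReducedWord.map_fst_eq_and_of_prod_eq φ hkk).1
    simp only at hfst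
    rw [conjList_map_fst, conjList_map_fst] at hfst
    have hlen := congrArg List.length hfst
    simp only [List.length_append, List.length_replicate, List.length_map,
      List.length_cons, List.length_nil] at hlen
    omega
  case hf =>
    intro k
    show IsConj (w.prod φ) _
    rw [isConj_iff]
    exact ⟨_, (conjList_prod w hl v r k _).symm⟩

private theorem toSubgroup_proper {A B : Subgroup G} (hproper : A ≠ ⊤ ∨ B ≠ ⊤) (u : ℤˣ)
    (hu : toSubgroup A B u = ⊤) : toSubgroup A B (-u) ≠ ⊤ := by
  rcases Int.units_eq_one_or u with rfl | rfl <;>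
    simp_all [toSubgroup]

theorem isICC_HNNExtension_of_isICC_base' {Γ₁ : Type*} [Group Γ₁]
    (Γ₀ Γ₀' : Subgroup Γ₁) (hproper : Γ₀ ≠ ⊤ ∨ Γ₀' ≠ ⊤) (φ : Γ₀ ≃* Γ₀')
    (h : Infinite Γ₁ ∧ ∀ g : Γ₁, g ≠ 1 → (conjugatesOf g).Infinite) :
    Infinite (HNNExtension Γ₁ Γ₀ Γ₀' φ) ∧
      ∀ g : HNNExtension Γ₁ Γ₀ Γ₀' φ, g ≠ 1 → (conjugatesOf g).Infinite := by
  obtain ⟨hinf, hicc⟩ := h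
  refine ⟨Infinite.of_injective _ (HNNExtension.of_injective φ), ?_⟩
  intro g hg
  obtain ⟨d⟩ := TransversalPair.nonempty Γ₁ Γ₀ Γ₀'
  set w : ReducedWord Γ₁ Γ₀ Γ₀' := ((equiv φ d) g).toReducedWord with hwdef
  have hw : w.prod φ = g := (equiv φ d).symm_apply_apply g
  by_cases hl : w.toList = []
  · -- g is in the image of the base group
    have hg' : g = of w.head := by rw [← hw]; simp [ReducedWord.prod, hl]
    have hh : w.head ≠ 1 := by rintro h1; rw [h1, map_one] at hg'; exact hg hg'
    have himg : of '' conjugatesOf w.head ⊆ conjugatesOf g := by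
      rintro x ⟨y, hy, rfl⟩
      rw [hg']
      exact MonoidHom.map_isConj of hy
    exact Set.Infinite.mono himg (((hicc w.head hh).image ((HNNExtension.of_injective φ).injOn)))
  · rw [← hw]
    set u1 : ℤˣ := (w.toList.head hl).1 with hu1
    set un : ℤˣ := (w.toList.getLast hl).1 with hun
    by_cases hud : un = -u1
    · exact infinite_conj w hl u1 1 (fun _ => rfl) (fun _ => hud)
    · have hueq : un = u1 := by
        rcases Int.units_eq_one_or u1 with h1 | h1 <;>
          rcases Int.units_eq_one_or un with h2 | h2 <;> simp_all
      by_cases hS : toSubgroup Γ₀ Γ₀' u1 = ⊤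
      · -- conjugate on the left side instead
        have hS' := toSubgroup_proper hproper u1 hS
        obtain ⟨x, hx⟩ : ∃ x, x ∉ toSubgroup Γ₀ Γ₀' (-u1) := by
          by_contra hc
          push_neg at hc
          exact hS' (Subgroup.eq_top_iff' _ |>.2 hc)
        refine infinite_conj w hl (-u1) (x * w.head⁻¹) ?_ ?_
        · intro hm
          rw [inv_mul_cancel_right] at hm
          exact absurd hm hx
        · intro _
          rw [← hun, hueq, neg_neg]
      · obtain ⟨x, hx⟩ : ∃ x, x ∉ toSubgroup Γ₀ Γ₀' u1 := by
          by_contra hc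
          push_neg at hc
          exact hS (Subgroup.eq_top_iff' _ |>.2 hc)
        refine infinite_conj w hl u1 (x⁻¹ * (w.toList.getLast hl).2) ?_ ?_
        · intro _; rfl
        · intro hm
          rw [mul_inv_rev, inv_inv, mul_inv_cancel_left, ← hun, hueq] at hm
          exact absurd hm hx

end Aux

/-- Let `Γ₀` and `Γ₀'` be subgroups of a group `Γ₁`, at least one of which is proper,
let `φ : Γ₀ ≃* Γ₀'` be an isomorphism and let `Γ` be the corresponding HNN extension.
If `Γ₁` is ICC, then `Γ` is ICC. -/
theorem isICC_HNNExtension_of_isICC_base {Γ₁ : Type*} [Group Γ₁]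
    (Γ₀ Γ₀' : Subgroup Γ₁) (hproper : Γ₀ ≠ ⊤ ∨ Γ₀' ≠ ⊤) (φ : Γ₀ ≃* Γ₀')
    (h : IsICC Γ₁) :
    IsICC (HNNExtension Γ₁ Γ₀ Γ₀' φ) := by
  obtain ⟨h1, h2⟩ := h
  exact isICC_HNNExtension_of_isICC_base' Γ₀ Γ₀' hproper φ ⟨h1, h2⟩
end

section
/- Let Γ₁ be a group, let Γ₀ and Γ₀′ be two subgroups of Γ₁ at least one of which is a proper subgroup of Γ₁, let φ : Γ₀ → Γ₀′ be an isomorphism, and let Γ be the corresponding HNN extension of Γ₁ over φ. Assume that every finitely generated subgroup of Γ₀ which is nontrivial (not reduced to the identity) and whose image in Γ (under the canonical embedding Γ₁ → Γ) is normal in Γ, is ICC. Then Γ is ICC. -/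
namespace HNNICCAux

open HNNExtension HNNExtension.NormalWord Subgroup List

variable {G : Type*} [Group G] {A B : Subgroup G}

/-- The chain condition on letters used in `ReducedWord`. -/
abbrev Rel (A B : Subgroup G) (a b : ℤˣ × G) : Prop :=
  a.2 ∈ toSubgroup A B a.1 → a.1 = b.1

variable (φ : A ≃* B)

/-- Product of a list of letters in the HNN extension. -/
def wprod (l : List (ℤˣ × G)) : HNNExtension G A B φ :=
  (l.map fun x : ℤˣ × G => (t ^ (x.1 : ℤ) * HNNExtension.of x.2 : HNNExtension G A B φ)).prod

@[simp] theorem wprod_nil : wprod φ ([] : List (ℤˣ × G)) = 1 := rfl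

@[simp] theorem wprod_cons (p : ℤˣ × G) (l : List (ℤˣ × G)) :
    wprod φ (p :: l) = t ^ (p.1 : ℤ) * of p.2 * wprod φ l := by
  simp [wprod]

@[simp] theorem wprod_append (l₁ l₂ : List (ℤˣ × G)) :
    wprod φ (l₁ ++ l₂) = wprod φ l₁ * wprod φ l₂ := by
  simp [wprod]

theorem wprod_replicate (n : ℕ) (u : ℤˣ) (g : G) :
    wprod φ (replicate n (u, g)) = (t ^ (u : ℤ) * of g) ^ n := by
  induction n with
  | zero => simp
  | succ n ih => rw [replicate_succ, wprod_cons, ih, pow_succ']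

theorem wprod_singleton (u : ℤˣ) (g : G) :
    wprod φ [(u, g)] = t ^ (u : ℤ) * of g := by
  simp [wprod]

theorem prod_mk (hd : G) (l : List (ℤˣ × G)) (hc : l.Chain' (Rel A B)) :
    ReducedWord.prod φ ⟨hd, l, hc⟩ = of hd * wprod φ l := by
  simp [ReducedWord.prod, wprod]

/-- A list all of whose letters have the same sign automatically satisfies the chain
condition. -/
theorem chain'_of_fst_eq (u : ℤˣ) (l : List (ℤˣ × G)) (h : ∀ p ∈ l, p.1 = u) :
    l.Chain' (Rel A B) := by
  induction l with
  | nil => exact List.isChain_nil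
  | cons a l ih =>
    refine List.isChain_cons.2 ⟨?_, ih fun p hp => h p (List.mem_cons_of_mem _ hp)⟩
    intro b hb _
    rw [h a List.mem_cons_self, h b (List.mem_cons_of_mem _ (List.mem_of_mem_head? hb))]

section Length

variable {φ}
variable (d : TransversalPair G A B)

/-- Length of the normal form of an element. -/
noncomputable def nlen (x : HNNExtension G A B φ) : ℕ :=
  (x • (NormalWord.empty : NormalWord d)).toList.length

theorem unitsSMul_length_le (u : ℤˣ) (w : NormalWord d) :
    (unitsSMul φ u w).toList.length ≤ w.toList.length + 1 := by
  rw [unitsSMul]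
  split_ifs with hcan
  · induction w using consRecOn with
    | ofGroup g => simp [Cancels, NormalWord.ofGroup] at hcan
    | cons g u' w h1 h2 ih =>
      simp only [unitsSMulWithCancel, consRecOn_cons]
      simp only [NormalWord.cons_toList, group_smul_toList, List.length_cons]
      omega
  · simp [NormalWord.cons]

theorem nlen_of_mul (g : G) (x : HNNExtension G A B φ) :
    nlen d (of g * x) = nlen d x := by
  simp only [nlen, mul_smul, of_smul_eq_smul, group_smul_toList]

theorem nlen_t_zpow_mul (u : ℤˣ) (x : HNNExtension G A B φ) :
    nlen d (t ^ (u : ℤ) * x) ≤ nlen d x + 1 := by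
  simp only [nlen, mul_smul, t_pow_smul_eq_unitsSMul]
  exact unitsSMul_length_le d u _

@[simp] theorem nlen_one : nlen d (1 : HNNExtension G A B φ) = 0 := by
  simp [nlen]

theorem nlen_le (l : List (ℤˣ × G)) :
    ∀ (hd : G) (x : HNNExtension G A B φ),
      nlen d (of hd * (wprod φ l * x)) ≤ l.length + nlen d x := by
  induction l with
  | nil => intro hd x; rw [wprod_nil, one_mul, nlen_of_mul]; simp
  | cons p l ih =>
    intro hd x
    have heq : of hd * (wprod φ (p :: l) * x)
        = of hd * (t ^ (p.1 : ℤ) * (of p.2 * (wprod φ l * x))) := by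
      rw [wprod_cons]; group
    rw [heq, nlen_of_mul]
    calc nlen d (t ^ (p.1 : ℤ) * (of p.2 * (wprod φ l * x)))
        ≤ nlen d (of p.2 * (wprod φ l * x)) + 1 := nlen_t_zpow_mul d _ _
      _ ≤ (l.length + nlen d x) + 1 := by
          have := ih p.2 x
          omega
      _ = (p :: l).length + nlen d x := by simp [Nat.add_comm, Nat.add_assoc, Nat.add_left_comm]

theorem nlen_reduced (W : ReducedWord G A B) :
    nlen d (W.prod φ) = W.toList.length := by
  obtain ⟨w', hw1, hw2, _⟩ := ReducedWord.exists_normalWord_prod_eq φ d W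
  have hsmul : (W.prod φ) • (NormalWord.empty : NormalWord d) = w' := by
    rw [← hw1]; exact prod_smul_empty φ w'
  have := congrArg List.length hw2
  simpa [nlen, hsmul] using this

end Length

/-- `t ^ n` is not in the range of `of` for positive `n`. -/
theorem t_pow_not_in_range (n : ℕ) (hn : 0 < n) :
    (t : HNNExtension G A B φ) ^ n ∉ (of.range : Subgroup (HNNExtension G A B φ)) := by
  intro hmem
  have hc : (replicate n ((1 : ℤˣ), (1 : G))).Chain' (Rel A B) :=
    chain'_of_fst_eq 1 _ (fun p hp => by rw [eq_of_mem_replicate hp])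
  have hprod : ReducedWord.prod φ ⟨1, replicate n ((1 : ℤˣ), (1 : G)), hc⟩
      = (t : HNNExtension G A B φ) ^ n := by
    rw [prod_mk, wprod_replicate]
    simp
  have := ReducedWord.toList_eq_nil_of_mem_of_range φ _ (by rw [hprod]; exact hmem)
  simp only at this
  rw [replicate_eq_nil_iff] at this
  omega

instance infinite_HNN : Infinite (HNNExtension G A B φ) := by
  refine Infinite.of_injective (fun n : ℕ => (t : HNNExtension G A B φ) ^ n) ?_
  intro n m hnm
  dsimp only at hnm
  by_contra hne
  wlog hlt : m < n generalizing n m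
  · exact this hnm.symm (Ne.symm hne) (by omega)
  have : (t : HNNExtension G A B φ) ^ (n - m) = 1 := by
    have hn : n = m + (n - m) := by omega
    rw [hn, pow_add] at hnm
    calc (t : HNNExtension G A B φ) ^ (n - m)
        = (t ^ m)⁻¹ * (t ^ m * t ^ (n - m)) := by group
      _ = (t ^ m)⁻¹ * t ^ m := by rw [hnm]
      _ = 1 := by group
  exact t_pow_not_in_range φ (n - m) (by omega) (this ▸ one_mem _)

/-- If `a ∉ A` then `t * of a * t⁻¹` is not in the range of `of`. -/
theorem conj_t_not_in_range {a : G} (ha : a ∉ A) :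
    t * of a * t⁻¹ ∉ (of.range : Subgroup (HNNExtension G A B φ)) := by
  intro hmem
  have hc : ([((1 : ℤˣ), a), ((-1 : ℤˣ), (1 : G))]).Chain' (Rel A B) := by
    refine List.isChain_pair.2 ?_
    intro hmem'
    exact absurd hmem' (by simpa using ha)
  have hprod : ReducedWord.prod φ ⟨1, [((1 : ℤˣ), a), ((-1 : ℤˣ), (1 : G))], hc⟩
      = t * of a * t⁻¹ := by
    rw [prod_mk]
    simp [wprod, mul_assoc, zpow_one, zpow_neg]
  have := ReducedWord.toList_eq_nil_of_mem_of_range φ _ (by rw [hprod]; exact hmem)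
  simp at this

/-- Conjugation formula for elements of the associated subgroups. -/
theorem t_zpow_mul_of (u : ℤˣ) {g : G} (hg : g ∈ toSubgroup A B u) :
    (t : HNNExtension G A B φ) ^ (u : ℤ) * of g
      = of (toSubgroupEquiv φ u ⟨g, hg⟩ : G) * t ^ (u : ℤ) := by
  rcases Int.units_eq_one_or u with rfl | rfl
  · rw [Units.val_one, zpow_one]; exact t_mul_of (φ := φ) ⟨g, hg⟩
  · rw [Units.val_neg, Units.val_one, zpow_neg, zpow_one]; exact inv_t_mul_of (φ := φ) ⟨g, hg⟩

theorem units_eq_neg_of_ne (u v : ℤˣ) (h : v ≠ u) : v = -u := by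
  rcases Int.units_eq_one_or u with rfl | rfl <;>
    rcases Int.units_eq_one_or v with rfl | rfl <;>
      first
        | rfl
        | exact absurd rfl h
        | decide

theorem shuffle {M : Type*} [Monoid M] (a b : M) (n : ℕ) :
    (a * b) ^ n * a = a * (b * a) ^ n := by
  induction n with
  | zero => simp
  | succ n ih =>
    calc (a * b) ^ (n + 1) * a = (a * b) ^ n * a * (b * a) := by
          rw [pow_succ, mul_assoc, mul_assoc, mul_assoc]
      _ = a * (b * a) ^ n * (b * a) := by rw [ih]
      _ = a * (b * a) ^ (n + 1) := by rw [pow_succ, mul_assoc]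


/-- Key case: an element conjugate to one represented by an all-positive word has
infinite conjugacy class. -/
theorem infinite_conj_of_positive (u₀ : ℤˣ) (hP : toSubgroup A B u₀ ≠ ⊤)
    (x γ : HNNExtension G A B φ) (ys : List (ℤˣ × G)) (hne : ys ≠ [])
    (hfst : ∀ p ∈ ys, p.1 = u₀) (hy : γ * x * γ⁻¹ = wprod φ ys) :
    (conjugatesOf x).Infinite := by
  classical
  obtain ⟨b, hb⟩ : ∃ b, b ∉ toSubgroup A B u₀ := by
    by_contra h'
    push_neg at h'
    exact hP ((Subgroup.eq_top_iff' _).2 h')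
  set lst := ys.getLast hne with hlstdef
  have hlst1 : lst.1 = u₀ := hfst lst (List.getLast_mem hne)
  set β : G := if lst.2 ∈ toSubgroup A B u₀ then b else 1 with hβdef
  have hβ : lst.2 * β⁻¹ ∉ toSubgroup A B u₀ := by
    by_cases hmem : lst.2 ∈ toSubgroup A B u₀
    · rw [hβdef, if_pos hmem]
      intro hP2
      have h1 : b⁻¹ ∈ toSubgroup A B u₀ := by
        have h2 := mul_mem (inv_mem hmem) hP2
        rwa [inv_mul_cancel_left] at h2
      exact hb (by simpa using inv_mem h1)
    · rw [hβdef, if_neg hmem]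
      simpa using hmem
  set s : HNNExtension G A B φ := t ^ (u₀ : ℤ) with hsdef
  set z : HNNExtension G A B φ := s * of β with hzdef
  set ys₀ := ys.dropLast with hys0
  have hysplit : ys₀ ++ [lst] = ys := List.dropLast_append_getLast hne
  set LL : ℕ → List (ℤˣ × G) := fun n =>
    (replicate (n+1) (u₀, β) ++ ys₀ ++ [(u₀, lst.2 * β⁻¹)])
      ++ (replicate n (-u₀, β⁻¹) ++ [(-u₀, (1:G))]) with hLLdef
  have hchain : ∀ n : ℕ, (LL n).Chain' (Rel A B) := by
    intro n
    refine List.isChain_append.2 ⟨?_, ?_, ?_⟩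
    · refine chain'_of_fst_eq u₀ _ ?_
      intro p hp
      rcases List.mem_append.1 hp with hp | hp
      · rcases List.mem_append.1 hp with hp | hp
        · rw [eq_of_mem_replicate hp]
        · exact hfst p ((List.dropLast_sublist ys).subset hp)
      · rw [List.mem_singleton] at hp
        rw [hp]
    · refine chain'_of_fst_eq (-u₀) _ ?_
      intro p hp
      rcases List.mem_append.1 hp with hp | hp
      · rw [eq_of_mem_replicate hp]
      · rw [List.mem_singleton] at hp
        rw [hp]
    · intro p hp q hq
      rw [List.getLast?_concat, Option.mem_some_iff] at hp
      subst hp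
      intro hmem
      exact absurd hmem hβ
  have hz1 : ∀ n : ℕ, (z ^ (n+1))⁻¹ = of β⁻¹ * (s⁻¹ * of β⁻¹) ^ n * s⁻¹ := by
    intro n
    rw [← inv_pow, hzdef, mul_inv_rev, ← map_inv]
    rw [pow_succ, ← mul_assoc, shuffle]
  have hprod : ∀ n : ℕ, ReducedWord.prod φ ⟨1, LL n, hchain n⟩
      = z ^ (n+1) * wprod φ ys * (z ^ (n+1))⁻¹ := by
    intro n
    rw [prod_mk, hz1 n, hLLdef]
    simp only [wprod_append, wprod_singleton, wprod_replicate, map_one, map_inv, map_mul]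
    have hneg : ((-u₀ : ℤˣ) : ℤ) = -(u₀ : ℤ) := by simp
    rw [hneg, ← hysplit, wprod_append, wprod_singleton, hlst1, ← hsdef, zpow_neg, ← hzdef]
    simp only [hsdef, ← hlstdef]
    group
  have hmemconj : ∀ n : ℕ, (z ^ (n+1) * γ) * x * (z ^ (n+1) * γ)⁻¹ ∈ conjugatesOf x :=
    fun n => isConj_iff.2 ⟨z ^ (n+1) * γ, rfl⟩
  refine Set.infinite_of_injective_forall_mem
    (f := fun n : ℕ => (z ^ (n+1) * γ) * x * (z ^ (n+1) * γ)⁻¹) ?_ hmemconj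
  intro n m hnm
  have hrw : ∀ k : ℕ, (z ^ (k+1) * γ) * x * (z ^ (k+1) * γ)⁻¹
      = ReducedWord.prod φ ⟨1, LL k, hchain k⟩ := by
    intro k
    have h1 : (z ^ (k+1) * γ) * x * (z ^ (k+1) * γ)⁻¹
        = z ^ (k+1) * (γ * x * γ⁻¹) * (z ^ (k+1))⁻¹ := by group
    rw [h1, hy, hprod k]
  have hfsteq := (ReducedWord.map_fst_eq_and_of_prod_eq φ
    (w₁ := ⟨1, LL n, hchain n⟩) (w₂ := ⟨1, LL m, hchain m⟩)
    (by rw [← hrw n, ← hrw m]; exact hnm)).1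
  have hlen := congrArg List.length hfsteq
  simp only [hLLdef, List.length_map, List.length_append, List.length_replicate,
    List.length_singleton] at hlen
  omega

/-- Main combinatorial lemma: an element not in the image of the base group has an
infinite conjugacy class, provided one of the associated subgroups is proper. -/
theorem infinite_conj_of_not_in_range (u₀ : ℤˣ) (hP : toSubgroup A B u₀ ≠ ⊤)
    (x : HNNExtension G A B φ)
    (hx : x ∉ (of.range : Subgroup (HNNExtension G A B φ))) :
    (conjugatesOf x).Infinite := by
  classical
  by_contra hinf
  rw [Set.not_infinite] at hinf
  obtain ⟨d⟩ := TransversalPair.nonempty G A B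
  set w : NormalWord d := x • NormalWord.empty with hwdef
  have hxw : w.prod φ = x := by rw [hwdef]; simp
  have hwe : w.prod φ = of w.head * wprod φ w.toList := rfl
  have hne : w.toList ≠ [] := by
    intro hnil
    exact hx ⟨w.head, by rw [← hxw, hwe, hnil, wprod_nil, mul_one]⟩
  set h0 := w.head with hh0
  set lst := w.toList.getLast hne with hlstdef
  set ys : List (ℤˣ × G) := w.toList.dropLast ++ [(lst.1, lst.2 * h0)] with hysdef
  have hsplit : w.toList.dropLast ++ [lst] = w.toList := List.dropLast_append_getLast hne
  have hychain : ys.Chain' (Rel A B) := by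
    have hchain := w.chain
    rw [← hsplit, List.isChain_append] at hchain
    rw [hysdef]; change List.IsChain _ _; rw [List.isChain_append]
    refine ⟨hchain.1, List.isChain_singleton _, ?_⟩
    intro p hp q hq
    rw [List.head?_cons, Option.mem_some_iff] at hq
    subst hq
    intro hm
    exact (hchain.2.2 p hp lst (by simp)) hm
  set y : HNNExtension G A B φ := (of h0)⁻¹ * x * of h0 with hydef
  have hyprod : y = wprod φ ys := by
    rw [hydef, ← hxw, hwe, ← hsplit, wprod_append, wprod_singleton, hysdef,
      wprod_append, wprod_singleton, map_mul]
    group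
    rfl
  set L := ys.length with hLdef
  have hL : 1 ≤ L := by
    rw [hLdef, hysdef]
    simp
  obtain ⟨b, hb⟩ : ∃ b, b ∉ toSubgroup A B u₀ := by
    by_contra h'
    push_neg at h'
    exact hP ((Subgroup.eq_top_iff' _).2 h')
  set z : HNNExtension G A B φ := t ^ (u₀ : ℤ) * of b with hzdef
  -- pigeonhole: some positive power of `z` commutes with `y`
  set f : ℕ → HNNExtension G A B φ :=
    fun n => (z ^ n * (of h0)⁻¹) * x * (z ^ n * (of h0)⁻¹)⁻¹ with hfdef
  have hfmem : ∀ n, f n ∈ conjugatesOf x := fun n => isConj_iff.2 ⟨_, rfl⟩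
  have hfni : ¬ Function.Injective f := by
    intro hinj
    exact Set.infinite_of_injective_forall_mem hinj hfmem hinf
  rw [Function.not_injective_iff] at hfni
  obtain ⟨n, m, hfnm, hnm⟩ := hfni
  have hfn : ∀ j : ℕ, f j = z ^ j * y * (z ^ j)⁻¹ := by
    intro j
    rw [hfdef, hydef]
    group
  have main : ∀ n m : ℕ, m < n → f n = f m → ∃ k₀ : ℕ, 1 ≤ k₀ ∧ z ^ k₀ * y = y * z ^ k₀ := by
    intro n m hlt hfe
    refine ⟨n - m, by omega, ?_⟩
    rw [hfn n, hfn m] at hfe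
    have h1 : z ^ n = z ^ m * z ^ (n - m) := by
      rw [← pow_add]
      congr 1
      omega
    have h2 : z ^ m * ((z ^ (n-m) * y * (z ^ (n-m))⁻¹) * (z ^ m)⁻¹) = z ^ m * (y * (z ^ m)⁻¹) := by
      calc z ^ m * ((z ^ (n-m) * y * (z ^ (n-m))⁻¹) * (z ^ m)⁻¹)
          = z ^ m * z ^ (n-m) * y * (z ^ m * z ^ (n-m))⁻¹ := by group
        _ = z ^ m * y * (z ^ m)⁻¹ := by rw [← h1]; exact hfe
        _ = z ^ m * (y * (z ^ m)⁻¹) := by group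
    have h3 := mul_right_cancel (mul_left_cancel h2)
    calc z ^ (n-m) * y = (z ^ (n-m) * y * (z ^ (n-m))⁻¹) * z ^ (n-m) := by group
      _ = y * z ^ (n-m) := by rw [h3]
  obtain ⟨k₀, hk₀, hcomm₀⟩ : ∃ k₀ : ℕ, 1 ≤ k₀ ∧ z ^ k₀ * y = y * z ^ k₀ := by
    rcases Nat.lt_or_ge m n with hlt | hge
    · exact main n m hlt hfnm
    · exact main m n (by omega) hfnm.symm
  set k := k₀ * L with hkdef
  have hcomm : z ^ k * y = y * z ^ k := by
    have hc : Commute (z ^ k₀) y := hcomm₀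
    have := hc.pow_left L
    rwa [← pow_mul] at this
  have hkL : L ≤ k := by
    rw [hkdef]
    exact Nat.le_mul_of_pos_left L (by omega)
  have hk1 : 1 ≤ k := le_trans hL hkL
  obtain ⟨k', hk'⟩ : ∃ k', k = k' + 1 := ⟨k - 1, by omega⟩
  -- left word is always reduced
  have hchainL : (replicate k (u₀, b) ++ ys).Chain' (Rel A B) := by
    refine List.isChain_append.2 ⟨?_, hychain, ?_⟩
    · exact chain'_of_fst_eq u₀ _ (fun p hp => by rw [eq_of_mem_replicate hp])
    · intro p hp q hq
      rw [hk', List.replicate_succ', List.getLast?_concat, Option.mem_some_iff] at hp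
      subst hp
      intro hm
      exact absurd hm hb
  have hprodL : ReducedWord.prod φ ⟨1, replicate k (u₀, b) ++ ys, hchainL⟩ = z ^ k * y := by
    rw [prod_mk, wprod_append, wprod_replicate, map_one, one_mul, ← hzdef, ← hyprod]
  have hyne : ys ≠ [] := by
    rw [hysdef]
    simp
  set lst' := ys.getLast hyne with hlstdef'
  by_cases hcase : lst'.2 ∈ toSubgroup A B lst'.1 ∧ lst'.1 = -u₀
  · -- cancellation case : length contradiction
    obtain ⟨hm2, hfst2⟩ := hcase
    have hmQ : lst'.2 ∈ toSubgroup A B (-u₀) := by rwa [hfst2] at hm2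
    set hha : G := (toSubgroupEquiv φ (-u₀) ⟨lst'.2, hmQ⟩ : G) with hhhadef
    have hneg : ((-u₀ : ℤˣ) : ℤ) = -(u₀ : ℤ) := by simp
    have hconj : (t : HNNExtension G A B φ) ^ (-(u₀:ℤ)) * of lst'.2 = of hha * t ^ (-(u₀:ℤ)) := by
      have h5 := t_zpow_mul_of φ (-u₀) hmQ
      rwa [hneg] at h5
    have hc2 : of lst'.2 = (t : HNNExtension G A B φ) ^ ((u₀:ℤ)) * (of hha * t ^ (-(u₀:ℤ))) := by
      rw [← hconj]
      group
    have hysplit2 : ys.dropLast ++ [lst'] = ys := List.dropLast_append_getLast hyne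
    have e1 : y * z ^ k = of (1:G) *
        (wprod φ ys.dropLast * (of (hha * b) * (wprod φ (replicate k' (u₀, b)) * 1))) := by
      have hz0 : (t : HNNExtension G A B φ) ^ (-(u₀:ℤ)) * z = of b := by
        rw [hzdef]
        group
      have hz3 : (t : HNNExtension G A B φ) ^ (-(u₀:ℤ)) * z ^ k = of b * z ^ k' := by
        rw [show z ^ k = z * z ^ k' from by rw [hk', pow_succ'], ← mul_assoc, hz0]
      conv_lhs => rw [hyprod, ← hysplit2]
      rw [wprod_append, wprod_singleton, hfst2, hneg, hconj, map_one, one_mul, mul_one,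
        wprod_replicate, ← hzdef, map_mul]
      simp only [mul_assoc]
      rw [hz3]
    have nl1 : nlen d (z ^ k * y) = k + L := by
      rw [← hprodL, nlen_reduced d]
      show (replicate k (u₀, b) ++ ys).length = k + L
      rw [List.length_append, List.length_replicate, hLdef]
    have nl2 : nlen d (y * z ^ k) ≤ (L - 1) + k' := by
      rw [e1]
      calc nlen d _ ≤ ys.dropLast.length
            + nlen d (of (hha * b) * (wprod φ (replicate k' (u₀, b)) * 1)) := nlen_le d _ _ _
        _ ≤ ys.dropLast.length + (k' + nlen d (1 : HNNExtension G A B φ)) := by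
            have := nlen_le d (replicate k' (u₀, b)) (hha * b) (1 : HNNExtension G A B φ)
            simp only [List.length_replicate] at this
            omega
        _ ≤ (L - 1) + k' := by
            simp only [nlen_one, List.length_dropLast, hLdef]
            omega
    rw [hcomm] at nl1
    omega
  · -- no-cancellation case : the word is all-positive
    have hrel : Rel A B lst' (u₀, b) := by
      intro hm
      by_contra hne1
      exact hcase ⟨hm, units_eq_neg_of_ne u₀ lst'.1 hne1⟩
    have hchainR : (ys ++ replicate k (u₀, b)).Chain' (Rel A B) := by
      refine List.isChain_append.2 ⟨hychain, ?_, ?_⟩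
      · exact chain'_of_fst_eq u₀ _ (fun p hp => by rw [eq_of_mem_replicate hp])
      · intro p hp q hq
        rw [List.getLast?_eq_getLast hyne, Option.mem_some_iff] at hp
        subst hp
        rw [hk', List.replicate_succ, List.head?_cons, Option.mem_some_iff] at hq
        subst hq
        exact hrel
    have hprodR : ReducedWord.prod φ ⟨1, ys ++ replicate k (u₀, b), hchainR⟩ = y * z ^ k := by
      rw [prod_mk, wprod_append, wprod_replicate, map_one, one_mul, ← hzdef, ← hyprod]
    have hfsteq := (ReducedWord.map_fst_eq_and_of_prod_eq φ
      (w₁ := ⟨1, replicate k (u₀, b) ++ ys, hchainL⟩)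
      (w₂ := ⟨1, ys ++ replicate k (u₀, b), hchainR⟩)
      (by rw [hprodL, hprodR]; exact hcomm)).1
    simp only [List.map_append, List.map_replicate] at hfsteq
    have hσlen : (ys.map Prod.fst).length = L := by simp [hLdef]
    have h1 : (replicate k u₀ ++ ys.map Prod.fst).take L = replicate L u₀ := by
      rw [List.take_append_of_le_length (by simp; omega), List.take_replicate]
      congr 1
      omega
    have h2 : (ys.map Prod.fst ++ replicate k u₀).take L = ys.map Prod.fst := by
      rw [← hσlen, List.take_left]
    have hσ : ys.map Prod.fst = replicate L u₀ := by
      rw [← h2, ← hfsteq, h1]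
    have hall : ∀ p ∈ ys, p.1 = u₀ := by
      intro p hp
      have h3 : p.1 ∈ ys.map Prod.fst := List.mem_map_of_mem hp
      rw [hσ] at h3
      exact eq_of_mem_replicate h3
    refine (infinite_conj_of_positive φ u₀ hP x ((of h0)⁻¹) ys hyne hall ?_) hinf
    rw [inv_inv, ← hyprod, hydef]

end HNNICCAux

/-- Let `Γ₀` and `Γ₀'` be subgroups of a group `Γ₁`, at least one of which is proper,
let `φ : Γ₀ ≃* Γ₀'` be an isomorphism and let `Γ` be the corresponding HNN extension.
Assume that every finitely generated nontrivial subgroup of `Γ₀` whose image in `Γ`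
(under the canonical embedding `Γ₁ → Γ`) is normal in `Γ` is ICC.  Then `Γ` is ICC. -/
theorem isICC_HNNExtension_of_normal_subgroups_isICC {Γ₁ : Type*} [Group Γ₁]
    (Γ₀ Γ₀' : Subgroup Γ₁) (hproper : Γ₀ ≠ ⊤ ∨ Γ₀' ≠ ⊤) (φ : Γ₀ ≃* Γ₀')
    (h : ∀ H : Subgroup Γ₁, H ≤ Γ₀ → H.FG → H ≠ ⊥ →
      (H.map (HNNExtension.of : Γ₁ →* HNNExtension Γ₁ Γ₀ Γ₀' φ)).Normal → IsICC H) :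
    IsICC (HNNExtension Γ₁ Γ₀ Γ₀' φ) := by
  classical
  constructor
  · exact HNNICCAux.infinite_HNN φ
  · intro g hg
    by_contra hinf
    rw [Set.not_infinite] at hinf
    obtain ⟨u₀, hP⟩ : ∃ u₀ : ℤˣ, HNNExtension.toSubgroup Γ₀ Γ₀' u₀ ≠ ⊤ := by
      rcases hproper with h1 | h1
      exacts [⟨1, by simpa using h1⟩, ⟨-1, by simpa using h1⟩]
    -- the subgroup of elements with finite conjugacy class
    set K : Subgroup (HNNExtension Γ₁ Γ₀ Γ₀' φ) :=
      { carrier := {x : HNNExtension Γ₁ Γ₀ Γ₀' φ | (conjugatesOf x).Finite}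
        one_mem' := Set.Finite.subset (Set.finite_singleton 1) (by
          intro c hc
          obtain ⟨u, rfl⟩ := isConj_iff.1 hc
          simp)
        mul_mem' := by
          intro a b ha hb
          refine Set.Finite.subset (ha.image2 (· * ·) hb) ?_
          intro c hc
          obtain ⟨u, rfl⟩ := isConj_iff.1 hc
          exact ⟨u * a * u⁻¹, isConj_iff.2 ⟨u, rfl⟩, u * b * u⁻¹, isConj_iff.2 ⟨u, rfl⟩,
            by group⟩
        inv_mem' := by
          intro a ha
          refine Set.Finite.subset (ha.image Inv.inv) ?_
          intro c hc
          obtain ⟨u, rfl⟩ := isConj_iff.1 hc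
          exact ⟨u * a * u⁻¹, isConj_iff.2 ⟨u, rfl⟩, by group⟩ } with hKdef
    haveI hKnormal : K.Normal := by
      constructor
      intro x hx c
      have hx' : (conjugatesOf x).Finite := hx
      show (conjugatesOf (c * x * c⁻¹)).Finite
      rwa [← IsConj.conjugatesOf_eq (isConj_iff.2 ⟨c, rfl⟩)]
    have hNK : Subgroup.normalClosure {g} ≤ K := Subgroup.normalClosure_le_normal (by
      intro x hx
      rw [Set.mem_singleton_iff] at hx
      subst hx
      exact hinf)
    have hNrange : ∀ x ∈ Subgroup.normalClosure {g},
        x ∈ (HNNExtension.of.range : Subgroup (HNNExtension Γ₁ Γ₀ Γ₀' φ)) := by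
      intro x hx
      by_contra hxr
      exact HNNICCAux.infinite_conj_of_not_in_range φ u₀ hP x hxr (hNK hx)
    have hmap : ((Subgroup.normalClosure {g}).comap
          (HNNExtension.of : Γ₁ →* HNNExtension Γ₁ Γ₀ Γ₀' φ)).map HNNExtension.of
        = Subgroup.normalClosure {g} := by
      apply le_antisymm (Subgroup.map_comap_le _ _)
      intro x hx
      obtain ⟨a, ha⟩ := hNrange x hx
      exact Subgroup.mem_map.2 ⟨a, Subgroup.mem_comap.2 (by rwa [ha]), ha⟩
    have hHle : (Subgroup.normalClosure {g}).comap
        (HNNExtension.of : Γ₁ →* HNNExtension Γ₁ Γ₀ Γ₀' φ) ≤ Γ₀ := by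
      intro a ha
      rw [Subgroup.mem_comap] at ha
      by_contra haA
      have h2 : HNNExtension.t * HNNExtension.of a * HNNExtension.t⁻¹
          ∈ Subgroup.normalClosure {g} :=
        Subgroup.normalClosure_normal.conj_mem _ ha HNNExtension.t
      exact HNNICCAux.conj_t_not_in_range φ haA (hNrange _ h2)
    have hNFG : (Subgroup.normalClosure
        ({g} : Set (HNNExtension Γ₁ Γ₀ Γ₀' φ))).FG := by
      rw [Subgroup.fg_iff]
      refine ⟨conjugatesOf g, ?_, hinf⟩
      rw [show Subgroup.normalClosure ({g} : Set (HNNExtension Γ₁ Γ₀ Γ₀' φ))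
        = Subgroup.closure (Group.conjugatesOfSet ({g} : Set (HNNExtension Γ₁ Γ₀ Γ₀' φ)))
          from rfl]
      congr 1
      simp [Group.conjugatesOfSet]
    have hHFG : ((Subgroup.normalClosure {g}).comap
        (HNNExtension.of : Γ₁ →* HNNExtension Γ₁ Γ₀ Γ₀' φ)).FG := by
      have e : ↥((Subgroup.normalClosure {g}).comap
            (HNNExtension.of : Γ₁ →* HNNExtension Γ₁ Γ₀ Γ₀' φ))
          ≃* ↥(Subgroup.normalClosure ({g} : Set (HNNExtension Γ₁ Γ₀ Γ₀' φ))) :=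
        (Subgroup.equivMapOfInjective _ _ (HNNExtension.of_injective φ)).trans
          (MulEquiv.subgroupCongr hmap)
      haveI : Group.FG ↥(Subgroup.normalClosure ({g} : Set (HNNExtension Γ₁ Γ₀ Γ₀' φ))) :=
        (Group.fg_iff_subgroup_fg _).2 hNFG
      haveI := Group.fg_of_surjective (f := e.symm.toMonoidHom) e.symm.surjective
      exact (Group.fg_iff_subgroup_fg _).1 inferInstance
    obtain ⟨a₀, ha₀⟩ := hNrange g (Subgroup.subset_normalClosure (Set.mem_singleton g))
    have ha₀H : a₀ ∈ (Subgroup.normalClosure {g}).comap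
        (HNNExtension.of : Γ₁ →* HNNExtension Γ₁ Γ₀ Γ₀' φ) := by
      rw [Subgroup.mem_comap, ha₀]
      exact Subgroup.subset_normalClosure (Set.mem_singleton g)
    have ha₀1 : a₀ ≠ 1 := by
      intro h1
      apply hg
      rw [← ha₀, h1, map_one]
    have hHbot : (Subgroup.normalClosure {g}).comap
        (HNNExtension.of : Γ₁ →* HNNExtension Γ₁ Γ₀ Γ₀' φ) ≠ ⊥ := by
      intro hbot
      exact ha₀1 ((Subgroup.eq_bot_iff_forall _).1 hbot a₀ ha₀H)
    have hHnorm : (((Subgroup.normalClosure {g}).comap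
        (HNNExtension.of : Γ₁ →* HNNExtension Γ₁ Γ₀ Γ₀' φ)).map
          (HNNExtension.of : Γ₁ →* HNNExtension Γ₁ Γ₀ Γ₀' φ)).Normal := by
      rw [hmap]
      exact Subgroup.normalClosure_normal
    obtain ⟨-, hICC⟩ := h _ hHle hHFG hHbot hHnorm
    have hinfH : (conjugatesOf (⟨a₀, ha₀H⟩ : ↥((Subgroup.normalClosure {g}).comap
        (HNNExtension.of : Γ₁ →* HNNExtension Γ₁ Γ₀ Γ₀' φ)))).Infinite := by
      refine hICC _ ?_
      intro h1
      exact ha₀1 (congrArg Subtype.val h1)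
    have hInjOn : Set.InjOn
        (fun c : ↥((Subgroup.normalClosure {g}).comap
            (HNNExtension.of : Γ₁ →* HNNExtension Γ₁ Γ₀ Γ₀' φ)) =>
          (HNNExtension.of (c : Γ₁) : HNNExtension Γ₁ Γ₀ Γ₀' φ))
        (conjugatesOf ⟨a₀, ha₀H⟩) :=
      Function.Injective.injOn (fun c c' hcc =>
        Subtype.val_injective (HNNExtension.of_injective φ hcc))
    have himg : (fun c : ↥((Subgroup.normalClosure {g}).comap
            (HNNExtension.of : Γ₁ →* HNNExtension Γ₁ Γ₀ Γ₀' φ)) =>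
          (HNNExtension.of (c : Γ₁) : HNNExtension Γ₁ Γ₀ Γ₀' φ)) ''
        conjugatesOf ⟨a₀, ha₀H⟩ ⊆ conjugatesOf g := by
      rintro _ ⟨c, hc, rfl⟩
      obtain ⟨u, hu⟩ := isConj_iff.1 hc
      refine isConj_iff.2 ⟨HNNExtension.of (u : Γ₁), ?_⟩
      rw [← hu]
      simp [map_mul, map_inv, ha₀]
    exact Set.Infinite.mono himg (Set.Infinite.image hInjOn hinfH) hinf
end

section
/- A group Γ is ICC if and only if it is strongly ICC, i.e. if and only if Γ is infinite and for every finite subset F of Γ with 1 ∉ F there exists a sequence (γ_j)_{j ≥ 1} of elements of Γ such that, for every x ∈ F, the conjugates γ_j⁻¹ x γ_j (j = 1, 2, 3, …) are pairwise distinct. -/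
open Pointwise

/-- A group is strongly ICC if it is infinite and for every finite subset `F` of
`Γ \ {1}` there is a sequence `(γ_j)` in `Γ` such that for every `x ∈ F` the conjugates
`γ_j⁻¹ * x * γ_j` are pairwise distinct. -/
def IsStronglyICC (Γ : Type*) [Group Γ] : Prop :=
  Infinite Γ ∧ ∀ F : Finset Γ, (1 : Γ) ∉ F →
    ∃ γ : ℕ → Γ, ∀ x ∈ F, Function.Injective (fun j : ℕ => (γ j)⁻¹ * x * γ j)

/-- If the centralizer of `x` has finite index, the conjugacy class of `x` is finite. -/
lemma conjugatesOf_finite_of_finiteIndex {Γ : Type*} [Group Γ] (x : Γ)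
    (h : (Subgroup.centralizer {x}).FiniteIndex) : (conjugatesOf x).Finite := by
  haveI : Finite (Γ ⧸ Subgroup.centralizer {x}) :=
    @Subgroup.finite_quotient_of_finiteIndex _ _ _ h
  set f : Γ ⧸ Subgroup.centralizer {x} → Γ :=
    Quotient.lift (fun a : Γ => a * x * a⁻¹) (by
      intro a b hab
      replace hab := QuotientGroup.leftRel_apply.mp hab
      rw [Subgroup.mem_centralizer_singleton_iff] at hab
      have h1 : b * x * b⁻¹ = a * (a⁻¹ * b * x) * b⁻¹ := by group
      rw [hab] at h1
      show a * x * a⁻¹ = b * x * b⁻¹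
      rw [h1]; group) with hf
  have hsub : conjugatesOf x ⊆ Set.range f := by
    intro b hb
    rw [conjugatesOf, Set.mem_setOf_eq, isConj_iff] at hb
    obtain ⟨c, hc⟩ := hb
    exact ⟨Quotient.mk'' c, hc⟩
  exact (Set.finite_range f).subset hsub

/-- Avoidance lemma: given a finite set of pairs `(x, c)` where each `x` has
infinite conjugacy class, there is `γ` with `γ⁻¹ x γ ≠ c` for all pairs. -/
lemma exists_avoiding {Γ : Type*} [Group Γ] (T : Finset (Γ × Γ))
    (hT : ∀ p ∈ T, (conjugatesOf p.1).Infinite) :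
    ∃ γ : Γ, ∀ p ∈ T, γ⁻¹ * p.1 * γ ≠ p.2 := by
  classical
  by_contra hcon
  push_neg at hcon
  set s : Finset (Γ × Γ) := T.filter (fun p => ∃ δ : Γ, δ * p.1 * δ⁻¹ = p.2) with hs
  set δ : Γ × Γ → Γ := fun p =>
    if h : ∃ δ : Γ, δ * p.1 * δ⁻¹ = p.2 then h.choose else 1 with hδ
  have hcovers : ⋃ p ∈ s, (δ p) • ((Subgroup.centralizer {p.1} : Subgroup Γ) : Set Γ)
      = Set.univ := by
    rw [Set.eq_univ_iff_forall]
    intro g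
    obtain ⟨p, hpT, hpeq⟩ := hcon g⁻¹
    have hpeq' : g * p.1 * g⁻¹ = p.2 := by simpa using hpeq
    have hex : ∃ δ : Γ, δ * p.1 * δ⁻¹ = p.2 := ⟨g, hpeq'⟩
    have hδp : δ p * p.1 * (δ p)⁻¹ = p.2 := by
      rw [hδ]; simp only [hex, dif_pos]; exact hex.choose_spec
    refine Set.mem_biUnion (Finset.mem_filter.mpr ⟨hpT, hex⟩) ?_
    rw [mem_leftCoset_iff, SetLike.mem_coe, Subgroup.mem_centralizer_singleton_iff]
    have : (δ p)⁻¹ * g * p.1 * ((δ p)⁻¹ * g)⁻¹ = p.1 := by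
      have := hδp.trans hpeq'.symm
      calc (δ p)⁻¹ * g * p.1 * ((δ p)⁻¹ * g)⁻¹
          = (δ p)⁻¹ * (g * p.1 * g⁻¹) * δ p := by group
        _ = (δ p)⁻¹ * (δ p * p.1 * (δ p)⁻¹) * δ p := by rw [hpeq', hδp]
        _ = p.1 := by group
    calc (δ p)⁻¹ * g * p.1 = ((δ p)⁻¹ * g * p.1 * ((δ p)⁻¹ * g)⁻¹) * ((δ p)⁻¹ * g) := by group
      _ = p.1 * ((δ p)⁻¹ * g) := by rw [this]
  obtain ⟨k, hks, hkfi⟩ := Subgroup.exists_finiteIndex_of_leftCoset_cover hcovers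
  exact hT k (Finset.mem_filter.mp hks).1 (conjugatesOf_finite_of_finiteIndex k.1 hkfi)

/-- A group is ICC if and only if it is strongly ICC. -/
theorem isICC_iff_isStronglyICC (Γ : Type*) [Group Γ] :
    IsICC Γ ↔ IsStronglyICC Γ := by
  classical
  constructor
  · rintro ⟨hinf, hicc⟩
    refine ⟨hinf, fun F hF => ?_⟩
    -- choice function avoiding finite bad sets
    have key : ∀ S : Finset Γ, ∃ γ : Γ, ∀ x ∈ F, ∀ c ∈ S, γ⁻¹ * x * γ ≠ c⁻¹ * x * c := by
      intro S
      obtain ⟨γ, hγ⟩ := exists_avoiding ((F ×ˢ S).image fun p => (p.1, p.2⁻¹ * p.1 * p.2))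
        (by
          rintro p hp
          simp only [Finset.mem_image, Finset.mem_product] at hp
          obtain ⟨q, ⟨hq1, _⟩, hq⟩ := hp
          rw [← hq]
          exact hicc q.1 (fun h => hF (h ▸ hq1)))
      refine ⟨γ, fun x hx c hc => ?_⟩
      exact hγ (x, c⁻¹ * x * c)
        (Finset.mem_image.mpr ⟨(x, c), Finset.mem_product.mpr ⟨hx, hc⟩, rfl⟩)
    choose pick hpick using key
    -- build the sequence recursively; state n is the list of the first n choices
    let state : ℕ → List Γ := fun n => Nat.rec [] (fun _ l => l ++ [pick l.toFinset]) n
    let γ : ℕ → Γ := fun n => pick (state n).toFinset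
    have hstate_succ : ∀ n, state (n + 1) = state n ++ [γ n] := fun n => rfl
    have hmem : ∀ n j, j < n → γ j ∈ state n := by
      intro n
      induction n with
      | zero => intro j hj; omega
      | succ n ih =>
        intro j hj
        rw [hstate_succ, List.mem_append]
        rcases Nat.lt_or_ge j n with h | h
        · exact Or.inl (ih j h)
        · have : j = n := by omega
          subst this
          exact Or.inr (List.mem_singleton_self _)
    have hne : ∀ x ∈ F, ∀ j n : ℕ, j < n → (γ n)⁻¹ * x * γ n ≠ (γ j)⁻¹ * x * γ j := by
      intro x hx j n hjn
      have := hpick (state n).toFinset x hx (γ j) (List.mem_toFinset.mpr (hmem n j hjn))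
      simpa using this
    refine ⟨γ, fun x hx a b hab => ?_⟩
    rcases lt_trichotomy a b with h | h | h
    · exact absurd hab.symm (hne x hx a b h)
    · exact h
    · exact absurd hab (hne x hx b a h)
  · rintro ⟨hinf, hsicc⟩
    refine ⟨hinf, fun g hg => ?_⟩
    obtain ⟨γ, hγ⟩ := hsicc {g} (by simpa using hg.symm)
    have hinj := hγ g (Finset.mem_singleton_self g)
    apply Set.infinite_of_injective_forall_mem (f := fun j : ℕ => (γ j)⁻¹ * g * γ j) hinj
    intro j
    rw [conjugatesOf, Set.mem_setOf_eq, isConj_iff]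
    exact ⟨(γ j)⁻¹, by group⟩
end

section
/- Let φ be an automorphism of the group ℤ² such that for every nonzero integer n and every nonzero v ∈ ℤ² one has φⁿ(v) ≠ v (this holds exactly when the corresponding matrix in GL(2,ℤ) is hyperbolic, i.e. has no eigenvalue that is a root of unity). Then the semidirect product ℤ² ⋊_φ ℤ, in which the generator of ℤ acts on ℤ² by φ, is ICC. -/
namespace IccAux

/-- `AddEquiv.toMultiplicative` as a monoid hom on automorphism groups. -/
def autHom : Multiplicative (AddAut (ℤ × ℤ)) →* MulAut (Multiplicative (ℤ × ℤ)) where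
  toFun x := AddEquiv.toMultiplicative x.toAdd
  map_one' := rfl
  map_mul' _ _ := rfl

lemma pow_apply (A : AddAut (ℤ × ℤ)) (n : ℤ) (v : ℤ × ℤ) :
    ((AddEquiv.toMultiplicative A : MulAut (Multiplicative (ℤ × ℤ))) ^ n)
      (Multiplicative.ofAdd v) = Multiplicative.ofAdd ((n • A) v) := by
  have h : (AddEquiv.toMultiplicative A : MulAut (Multiplicative (ℤ × ℤ))) ^ n
      = autHom (Multiplicative.ofAdd (n • A)) := by
    rw [ofAdd_zsmul]; exact (map_zpow autHom (Multiplicative.ofAdd A) n).symm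
  rw [h]; rfl

end IccAux

open IccAux in
/-- Let `φ` be an automorphism of `ℤ²` such that `φⁿ(v) ≠ v` for every nonzero integer
`n` and every nonzero `v ∈ ℤ²` (the "hyperbolic" case).  Then the semidirect product
`ℤ² ⋊_φ ℤ`, in which the generator of `ℤ` acts by `φ`, is ICC. -/
theorem isICC_semidirectProduct_of_hyperbolic (A : AddAut (ℤ × ℤ))
    (hA : ∀ n : ℤ, n ≠ 0 → ∀ v : ℤ × ℤ, v ≠ 0 → (n • A) v ≠ v) :
    IsICC (Multiplicative (ℤ × ℤ) ⋊[zpowersHom (MulAut (Multiplicative (ℤ × ℤ)))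
      (AddEquiv.toMultiplicative A)] Multiplicative ℤ) := by
  set φ := zpowersHom (MulAut (Multiplicative (ℤ × ℤ))) (AddEquiv.toMultiplicative A) with hφ
  set G := Multiplicative (ℤ × ℤ) ⋊[φ] Multiplicative ℤ with hG
  have hφapp : ∀ (n : Multiplicative ℤ) (x : Multiplicative (ℤ × ℤ)),
      φ n x = Multiplicative.ofAdd ((n.toAdd • A) x.toAdd) := by
    intro n x
    conv_lhs => rw [hφ, zpowersHom_apply, ← ofAdd_toAdd x]
    exact pow_apply A n.toAdd x.toAdd
  constructor
  · exact Infinite.of_injective (SemidirectProduct.inr : Multiplicative ℤ → G)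
      SemidirectProduct.inr_injective
  intro g hg
  set v : ℤ × ℤ := g.left.toAdd with hv
  set m : ℤ := g.right.toAdd with hm
  by_cases hm0 : m = 0
  · -- g = (v, 0) with v ≠ 0; conjugate by (0, n)
    have hv0 : v ≠ 0 := by
      intro h
      apply hg
      refine SemidirectProduct.ext ?_ ?_
      · rw [← ofAdd_toAdd g.left, ← hv, h]; rfl
      · rw [← ofAdd_toAdd g.right, ← hm, hm0]; rfl
    apply Set.infinite_of_injective_forall_mem
      (f := fun n : ℤ => (⟨1, Multiplicative.ofAdd n⟩ : G) * g * (⟨1, Multiplicative.ofAdd n⟩ : G)⁻¹)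
    ·
      intro n₁ n₂ h
      have h1 := congrArg SemidirectProduct.left h
      simp only [SemidirectProduct.mul_left, SemidirectProduct.inv_left,
        SemidirectProduct.mul_right, SemidirectProduct.inv_right, one_mul,
        map_one, mul_one, hφapp, toAdd_ofAdd] at h1
      have h2 : (n₁ • A) v = (n₂ • A) v := by
        simpa [hv] using Multiplicative.ofAdd.injective h1
      by_contra hne
      have hdiff : n₁ - n₂ ≠ 0 := sub_ne_zero.mpr hne
      apply hA (n₁ - n₂) hdiff v hv0
      have hcomm : (n₂ • A) (((n₁ - n₂) • A) v) = (n₂ • A) v := by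
        rw [← AddAut.add_apply, ← add_zsmul, show n₂ + (n₁ - n₂) = n₁ from by ring, h2]
      exact (n₂ • A).injective hcomm
    · intro n; exact isConj_iff.mpr ⟨_, rfl⟩
  · -- m ≠ 0; conjugate by (w, 0)
    apply Set.infinite_of_injective_forall_mem
      (f := fun w : ℤ × ℤ =>
        (⟨Multiplicative.ofAdd w, 1⟩ : G) * g * (⟨Multiplicative.ofAdd w, 1⟩ : G)⁻¹)
    ·
      intro w₁ w₂ h
      have h1 := congrArg SemidirectProduct.left h
      simp only [SemidirectProduct.mul_left, SemidirectProduct.inv_left,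
        SemidirectProduct.mul_right, SemidirectProduct.inv_right, map_one,
        one_mul, mul_one, inv_one, hφapp, toAdd_ofAdd] at h1
      simp only [MulAut.one_apply, toAdd_inv, toAdd_ofAdd] at h1
      have h1' := congrArg Multiplicative.toAdd h1
      simp only [toAdd_mul, toAdd_ofAdd] at h1'
      have h2 : w₁ + (m • A) (-w₁) = w₂ + (m • A) (-w₂) := by
        have : (w₁ + (m • A) (-w₁)) + g.left.toAdd = (w₂ + (m • A) (-w₂)) + g.left.toAdd := by
          rw [← hm] at h1'
          linear_combination h1'
        exact add_right_cancel this
      by_contra hne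
      apply hA m hm0 (w₁ - w₂) (sub_ne_zero.mpr hne)
      have key : (m • A) (w₁ - w₂) = w₁ - w₂ := by
        rw [map_neg, map_neg] at h2
        rw [map_sub]
        have : ((m • A) w₁ : ℤ × ℤ) - (m • A) w₂ = w₁ - w₂ := by
          refine Prod.ext ?_ ?_
          · have c1 := congrArg Prod.fst h2
            simp [Prod.fst_add, Prod.fst_sub] at c1 ⊢
            omega
          · have c2 := congrArg Prod.snd h2
            simp [Prod.snd_add, Prod.snd_sub] at c2 ⊢
            omega
        exact this
      exact key
    · intro w; exact isConj_iff.mpr ⟨_, rfl⟩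
end
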